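/- arXiv:2504.06700 — 8 statements merged into one kernel-verified Lean document; each statement's English description precedes it below -/
import Mathlib

section
/- Let x̃ be an optimal solution of LP-(*), i.e., a feasible solution whose objective value Val(x̃) is minimal among all feasible solutions. Then Val(x̃) = Σ_{t=1}^ℓ δ_t ( Σ_{{u,v}∈E^(t)} x̃^(t){u,v} + Σ_{{u,v}∈NE^(t)} (1 − x̃^(t){u,v}) ) ≥ Σ_{t=1}^ℓ δ_t · |NFbdNE^(t)|, where NFbdNE^(t) := {{u,v} ∈ NE^(t) : x̃^(t){u,v} < 1} is the set of non-forbidden non-edge pairs at layer t. -/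
open Finset
open scoped Classical

/-- Feasibility for LP-(*): each layer `t ∈ {1,…,ℓ}` carries a `[0,1]`-valued
function on unordered pairs (vanishing on the diagonal) satisfying the
triangle inequality, and the values are monotone non-increasing bottom-up. -/
def LPStarFeasible {V : Type*} (ℓ : ℕ) (x : ℕ → Sym2 V → ℝ) : Prop :=
  (∀ t ∈ Finset.Icc 1 ℓ, ∀ u : V, x t s(u, u) = 0) ∧
  (∀ t ∈ Finset.Icc 1 ℓ, ∀ u v p : V, x t s(u, v) ≤ x t s(u, p) + x t s(p, v)) ∧
  (∀ t ∈ Finset.Icc 1 ℓ, ∀ e : Sym2 V, 0 ≤ x t e ∧ x t e ≤ 1) ∧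
  (∀ t, 1 ≤ t → t < ℓ → ∀ e : Sym2 V, x (t + 1) e ≤ x t e)

/-- The objective value of LP-(*):
`Σ_t δ_t (Σ_{e ∈ E^(t)} x^(t)_e + Σ_{e ∈ NE^(t)} (1 − x^(t)_e))`,
where `NE^(t)` is the set of non-diagonal pairs not in `E^(t)`. -/
noncomputable def LPStarVal {V : Type*} [Fintype V] [DecidableEq V]
    (ℓ : ℕ) (δ : ℕ → ℝ) (E : ℕ → Finset (Sym2 V)) (x : ℕ → Sym2 V → ℝ) : ℝ :=
  ∑ t ∈ Finset.Icc 1 ℓ, δ t *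
    ((∑ e ∈ E t, x t e) +
      ∑ e ∈ Finset.univ.filter (fun e : Sym2 V => ¬ e.IsDiag) \ E t, (1 - x t e))

private lemma min_tri (a b c ε : ℝ) (hb : 0 ≤ b) (hc : 0 ≤ c) (hε : 0 ≤ ε)
    (h : a ≤ b + c) :
    min ((1+ε)*a) 1 ≤ min ((1+ε)*b) 1 + min ((1+ε)*c) 1 := by
  rcases le_or_gt 1 ((1+ε)*b) with h1 | h1
  · have hb1 : min ((1+ε)*b) 1 = 1 := min_eq_right h1
    have h2 : (0:ℝ) ≤ min ((1+ε)*c) 1 := le_min (by positivity) one_pos.le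
    have h3 := min_le_right ((1+ε)*a) 1
    linarith
  rcases le_or_gt 1 ((1+ε)*c) with h2 | h2
  · have hc1 : min ((1+ε)*c) 1 = 1 := min_eq_right h2
    have h3 : (0:ℝ) ≤ min ((1+ε)*b) 1 := le_min (by positivity) one_pos.le
    have h4 := min_le_right ((1+ε)*a) 1
    linarith
  · rw [min_eq_left h1.le, min_eq_left h2.le]
    have h3 := min_le_left ((1+ε)*a) 1
    nlinarith

/-- Any optimal solution `x̃` of LP-(*) satisfies
`Val(x̃) ≥ Σ_t δ_t · |NFbdNE^(t)|`, where
`NFbdNE^(t) = {{u,v} ∈ NE^(t) : x̃^(t){u,v} < 1}` is the set of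
non-forbidden non-edge pairs at layer `t`. -/
theorem stmt2 (V : Type*) [Fintype V] [DecidableEq V]
    (ℓ : ℕ) (hℓ : 1 ≤ ℓ)
    (δ : ℕ → ℝ) (hδ : ∀ t, 0 ≤ δ t)
    (E : ℕ → Finset (Sym2 V)) (hE : ∀ t, ∀ e ∈ E t, ¬ e.IsDiag)
    (x : ℕ → Sym2 V → ℝ)
    (hfeas : LPStarFeasible ℓ x)
    (hopt : ∀ y : ℕ → Sym2 V → ℝ, LPStarFeasible ℓ y →
      LPStarVal ℓ δ E x ≤ LPStarVal ℓ δ E y) :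
    ∑ t ∈ Finset.Icc 1 ℓ,
        δ t * (({e : Sym2 V | ¬ e.IsDiag ∧ e ∉ E t ∧ x t e < 1}).ncard : ℝ)
      ≤ LPStarVal ℓ δ E x := by
  classical
  obtain ⟨hdiag, htri, hbd, hmono⟩ := hfeas
  -- Notation for non-edges and non-forbidden non-edges
  set NE : ℕ → Finset (Sym2 V) :=
    fun t => Finset.univ.filter (fun e : Sym2 V => ¬ e.IsDiag) \ E t with hNE
  set F : ℕ → Finset (Sym2 V) := fun t => (NE t).filter (fun e => x t e < 1) with hF
  have hFsub : ∀ t, F t ⊆ NE t := fun t => Finset.filter_subset _ _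
  -- Choice of ε
  set P : Finset (ℕ × Sym2 V) :=
    (Finset.Icc 1 ℓ ×ˢ (Finset.univ : Finset (Sym2 V))).filter
      (fun p => x p.1 p.2 < 1) with hP
  set εs : Finset ℝ := insert 1 (P.image (fun p => 1 - x p.1 p.2)) with hεs
  have hεsne : εs.Nonempty := ⟨1, by simp [hεs]⟩
  set ε : ℝ := εs.min' hεsne with hεdef
  have hεpos : 0 < ε := by
    have hmem : ε ∈ insert (1:ℝ) (P.image (fun p => 1 - x p.1 p.2)) :=
      Finset.min'_mem εs hεsne
    rcases Finset.mem_insert.1 hmem with h | h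
    · rw [h]; norm_num
    · obtain ⟨p, hp, hpe⟩ := Finset.mem_image.1 h
      have hp2 := (Finset.mem_filter.1 hp).2
      rw [← hpe]; linarith
  have hεle : ∀ t ∈ Finset.Icc 1 ℓ, ∀ e : Sym2 V, x t e < 1 → ε ≤ 1 - x t e := by
    intro t ht e hx
    apply Finset.min'_le
    rw [hεs]
    refine Finset.mem_insert_of_mem (Finset.mem_image.2 ⟨(t, e), ?_, rfl⟩)
    rw [hP, Finset.mem_filter]
    exact ⟨Finset.mem_product.2 ⟨ht, Finset.mem_univ _⟩, hx⟩
  -- the scaled solution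
  set y : ℕ → Sym2 V → ℝ := fun t e => min ((1+ε) * x t e) 1 with hy
  have hyfeas : LPStarFeasible ℓ y := by
    refine ⟨?_, ?_, ?_, ?_⟩
    · intro t ht u
      simp [hy, hdiag t ht u]
    · intro t ht u v p
      exact min_tri _ _ _ _ (hbd t ht _).1 (hbd t ht _).1 hεpos.le (htri t ht u v p)
    · intro t ht e
      constructor
      · exact le_min (mul_nonneg (by linarith) (hbd t ht e).1) zero_le_one
      · exact min_le_right _ _
    · intro t ht1 ht2 e
      exact min_le_min (by nlinarith [hmono t ht1 ht2 e]) le_rfl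
  have hxy := hopt y hyfeas
  -- basic pointwise facts
  have hyx : ∀ t ∈ Finset.Icc 1 ℓ, ∀ e, x t e ≤ y t e := by
    intro t ht e
    exact le_min (by nlinarith [(hbd t ht e).1]) (hbd t ht e).2
  have hyle : ∀ t e, y t e ≤ (1+ε) * x t e := fun t e => min_le_left _ _
  have hyF : ∀ t ∈ Finset.Icc 1 ℓ, ∀ e ∈ F t, y t e = (1+ε) * x t e := by
    intro t ht e he
    rw [hF, Finset.mem_filter] at he
    have h1 : ε ≤ 1 - x t e := hεle t ht e he.2
    have h2 : ε * x t e ≤ ε := by nlinarith [(hbd t ht e).1, (hbd t ht e).2]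
    exact min_eq_left (by nlinarith)
  -- key sums, per layer
  set A : ℕ → ℝ := fun t => ∑ e ∈ F t, x t e with hA
  set B : ℕ → ℝ := fun t => ∑ e ∈ E t, x t e with hB
  set C : ℕ → ℝ := fun t => ∑ e ∈ NE t, (1 - x t e) with hC
  -- step: per-layer comparison for y
  have step : ∀ t ∈ Finset.Icc 1 ℓ,
      δ t * ((∑ e ∈ E t, y t e) + ∑ e ∈ NE t, (1 - y t e))
        ≤ δ t * (B t + C t) + ε * (δ t * B t) - ε * (δ t * A t) := by
    intro t ht
    have hEy : (∑ e ∈ E t, y t e) ≤ B t + ε * B t := by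
      have : (∑ e ∈ E t, y t e) ≤ ∑ e ∈ E t, (1+ε) * x t e :=
        Finset.sum_le_sum (fun e _ => hyle t e)
      rw [← Finset.mul_sum] at this
      rw [hB]; nlinarith [this]
    have hNEy : (∑ e ∈ NE t, (1 - y t e)) ≤ C t - ε * A t := by
      have h1 : ε * A t ≤ ∑ e ∈ NE t, (y t e - x t e) := by
        have h2 : (∑ e ∈ F t, (y t e - x t e)) ≤ ∑ e ∈ NE t, (y t e - x t e) :=
          Finset.sum_le_sum_of_subset_of_nonneg (hFsub t)
            (fun e he _ => by linarith [hyx t ht e])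
        have h3 : (∑ e ∈ F t, (y t e - x t e)) = ε * A t := by
          rw [hA, Finset.mul_sum]
          refine Finset.sum_congr rfl (fun e he => ?_)
          rw [hyF t ht e he]; ring
        linarith
      have h4 : (∑ e ∈ NE t, (1 - y t e))
          = C t - ∑ e ∈ NE t, (y t e - x t e) := by
        rw [hC, ← Finset.sum_sub_distrib]
        exact Finset.sum_congr rfl (fun e _ => by ring)
      linarith
    have hcore : (∑ e ∈ E t, y t e) + ∑ e ∈ NE t, (1 - y t e)
        ≤ (B t + C t) + ε * B t - ε * A t := by linarith
    calc δ t * ((∑ e ∈ E t, y t e) + ∑ e ∈ NE t, (1 - y t e))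
        ≤ δ t * ((B t + C t) + ε * B t - ε * A t) :=
          mul_le_mul_of_nonneg_left hcore (hδ t)
      _ = δ t * (B t + C t) + ε * (δ t * B t) - ε * (δ t * A t) := by ring
  -- sum the step
  have hValx : LPStarVal ℓ δ E x = ∑ t ∈ Finset.Icc 1 ℓ, δ t * (B t + C t) := rfl
  have hValy : LPStarVal ℓ δ E y
      = ∑ t ∈ Finset.Icc 1 ℓ,
          δ t * ((∑ e ∈ E t, y t e) + ∑ e ∈ NE t, (1 - y t e)) := rfl
  have hsumstep : LPStarVal ℓ δ E y
      ≤ (∑ t ∈ Finset.Icc 1 ℓ, δ t * (B t + C t))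
        + ε * (∑ t ∈ Finset.Icc 1 ℓ, δ t * B t)
        - ε * (∑ t ∈ Finset.Icc 1 ℓ, δ t * A t) := by
    rw [hValy]
    calc (∑ t ∈ Finset.Icc 1 ℓ,
          δ t * ((∑ e ∈ E t, y t e) + ∑ e ∈ NE t, (1 - y t e)))
        ≤ ∑ t ∈ Finset.Icc 1 ℓ,
            (δ t * (B t + C t) + ε * (δ t * B t) - ε * (δ t * A t)) :=
          Finset.sum_le_sum step
      _ = _ := by
          rw [Finset.sum_sub_distrib, Finset.sum_add_distrib, ← Finset.mul_sum,
            ← Finset.mul_sum]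
  -- the key inequality
  have hkey : (∑ t ∈ Finset.Icc 1 ℓ, δ t * A t)
      ≤ ∑ t ∈ Finset.Icc 1 ℓ, δ t * B t := by
    rw [hValx] at hxy
    have h5 : ε * (∑ t ∈ Finset.Icc 1 ℓ, δ t * A t)
        ≤ ε * (∑ t ∈ Finset.Icc 1 ℓ, δ t * B t) := by linarith
    exact le_of_mul_le_mul_left h5 hεpos
  -- final assembly
  have hcard : ∀ t ∈ Finset.Icc 1 ℓ,
      δ t * (({e : Sym2 V | ¬ e.IsDiag ∧ e ∉ E t ∧ x t e < 1}).ncard : ℝ)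
        ≤ δ t * A t + δ t * C t := by
    intro t ht
    have hset : {e : Sym2 V | ¬ e.IsDiag ∧ e ∉ E t ∧ x t e < 1} = ↑(F t) := by
      ext e
      simp [hF, hNE, and_assoc]
    have hcard2 : (({e : Sym2 V | ¬ e.IsDiag ∧ e ∉ E t ∧ x t e < 1}).ncard : ℝ)
        = ∑ e ∈ F t, (1 : ℝ) := by
      rw [hset, Set.ncard_coe_finset]
      simp
    rw [hcard2]
    have h1 : (∑ e ∈ F t, (1:ℝ)) = A t + ∑ e ∈ F t, (1 - x t e) := by
      rw [hA, ← Finset.sum_add_distrib]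
      exact Finset.sum_congr rfl (fun e _ => by ring)
    have h2 : (∑ e ∈ F t, (1 - x t e)) ≤ C t := by
      rw [hC]
      exact Finset.sum_le_sum_of_subset_of_nonneg (hFsub t)
        (fun e he _ => by linarith [(hbd t ht e).2])
    have h3 : (∑ e ∈ F t, (1:ℝ)) ≤ A t + C t := by linarith
    calc δ t * (∑ e ∈ F t, (1:ℝ)) ≤ δ t * (A t + C t) :=
          mul_le_mul_of_nonneg_left h3 (hδ t)
      _ = δ t * A t + δ t * C t := by ring
  calc (∑ t ∈ Finset.Icc 1 ℓ,
        δ t * (({e : Sym2 V | ¬ e.IsDiag ∧ e ∉ E t ∧ x t e < 1}).ncard : ℝ))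
      ≤ ∑ t ∈ Finset.Icc 1 ℓ, (δ t * A t + δ t * C t) :=
        Finset.sum_le_sum hcard
    _ = (∑ t ∈ Finset.Icc 1 ℓ, δ t * A t) + ∑ t ∈ Finset.Icc 1 ℓ, δ t * C t := by
        rw [Finset.sum_add_distrib]
    _ ≤ (∑ t ∈ Finset.Icc 1 ℓ, δ t * B t) + ∑ t ∈ Finset.Icc 1 ℓ, δ t * C t := by
        linarith [hkey]
    _ = LPStarVal ℓ δ E x := by
        rw [hValx, ← Finset.sum_add_distrib]
        exact Finset.sum_congr rfl (fun t _ => by ring)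
end

section
/- Let V be a finite set and let x, x' : V × V → ℝ be symmetric nonnegative functions with x(u,u) = x'(u,u) = 0, each satisfying the triangle inequality, with x(u,v) ≤ x'(u,v) for all u,v (x is the layer-t distance, x' the layer-(t−1) distance). Let Q, Q' ⊆ V be disjoint sets with diam_x(Q) < 1/3 and diam_x(Q') < 1/3, let P ⊆ V, and suppose there exist p ∈ P ∩ Q and q ∈ P ∩ Q' with x'(p,q) < 1/3. Then for every α with 0 < α < 1 it cannot hold simultaneously that |{w ∈ P \ Q : min_{u∈P∩Q} x(w,u) < 2/3}| < α·|P ∩ Q| and |{w ∈ P \ Q' : min_{u∈P∩Q'} x(w,u) < 2/3}| < α·|P ∩ Q'|. (This is the key geometric fact proving Lemma 3.1, that the merge candidates Candi^(t)(Q) and Candi^(t)(Q') of distinct pre-clusters Q ≠ Q' are disjoint.) -/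
/-- The key geometric fact behind the disjointness of merge candidate sets
(Lemma 3.1): let `x ≤ x'` be two (pseudo)metrics on a finite set `V`
(layer-`t` and layer-`(t−1)` distances), let `Q, Q'` be disjoint sets of
diameter `< 1/3` w.r.t. `x`, let `P ⊆ V`, and suppose there are
`p ∈ P ∩ Q`, `q ∈ P ∩ Q'` with `x'(p,q) < 1/3`.  Then for every
`0 < α < 1` it cannot simultaneously hold that
`|Ball_{<2/3}(P∩Q, P∖Q)| < α·|P∩Q|` and
`|Ball_{<2/3}(P∩Q', P∖Q')| < α·|P∩Q'|`. -/
theorem stmt4 (V : Type*) [Fintype V]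
    (x x' : V → V → ℝ)
    (hxsym : ∀ u w, x u w = x w u) (hxsym' : ∀ u w, x' u w = x' w u)
    (hxnn : ∀ u w, 0 ≤ x u w) (hxnn' : ∀ u w, 0 ≤ x' u w)
    (hxdiag : ∀ u, x u u = 0) (hxdiag' : ∀ u, x' u u = 0)
    (hxtri : ∀ u w p, x u w ≤ x u p + x p w)
    (hxtri' : ∀ u w p, x' u w ≤ x' u p + x' p w)
    (hle : ∀ u w, x u w ≤ x' u w)
    (Q Q' P : Set V) (hdisj : Disjoint Q Q')
    (hdiamQ : ∀ u ∈ Q, ∀ w ∈ Q, x u w < 1 / 3)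
    (hdiamQ' : ∀ u ∈ Q', ∀ w ∈ Q', x u w < 1 / 3)
    (p q : V) (hp : p ∈ P ∩ Q) (hq : q ∈ P ∩ Q') (hpq : x' p q < 1 / 3)
    (α : ℝ) (hα0 : 0 < α) (hα1 : α < 1) :
    ¬ (((({w ∈ P \ Q | ∃ u ∈ P ∩ Q, x w u < 2 / 3}).ncard : ℝ)
          < α * ((P ∩ Q).ncard : ℝ)) ∧
       ((({w ∈ P \ Q' | ∃ u ∈ P ∩ Q', x w u < 2 / 3}).ncard : ℝ)
          < α * ((P ∩ Q').ncard : ℝ))) := by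
  rintro ⟨h1, h2⟩
  -- P ∩ Q' ⊆ first ball
  have hsub1 : P ∩ Q' ⊆ {w ∈ P \ Q | ∃ u ∈ P ∩ Q, x w u < 2 / 3} := by
    rintro w ⟨hwP, hwQ'⟩
    refine ⟨⟨hwP, fun hwQ => (hdisj.ne_of_mem hwQ hwQ') rfl⟩, p, hp, ?_⟩
    calc x w p ≤ x w q + x q p := hxtri w p q
      _ < 1 / 3 + 1 / 3 := by
          have h1' := hdiamQ' w hwQ' q hq.2
          have h2' : x q p < 1 / 3 := lt_of_le_of_lt (hle q p) (by rw [hxsym']; exact hpq)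
          linarith
      _ = 2 / 3 := by norm_num
  have hsub2 : P ∩ Q ⊆ {w ∈ P \ Q' | ∃ u ∈ P ∩ Q', x w u < 2 / 3} := by
    rintro w ⟨hwP, hwQ⟩
    refine ⟨⟨hwP, fun hwQ' => hdisj.ne_of_mem hwQ hwQ' rfl⟩, q, hq, ?_⟩
    calc x w q ≤ x w p + x p q := hxtri w q p
      _ < 1 / 3 + 1 / 3 := by
          have h1' := hdiamQ w hwQ p hp.2
          have h2' : x p q < 1 / 3 := lt_of_le_of_lt (hle p q) hpq
          linarith
      _ = 2 / 3 := by norm_num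
  have hfin : ∀ S : Set V, S.Finite := fun S => S.toFinite
  have hc1 : ((P ∩ Q').ncard : ℝ) ≤ (({w ∈ P \ Q | ∃ u ∈ P ∩ Q, x w u < 2 / 3}).ncard : ℝ) := by
    exact_mod_cast Set.ncard_le_ncard hsub1 (hfin _)
  have hc2 : ((P ∩ Q).ncard : ℝ) ≤ (({w ∈ P \ Q' | ∃ u ∈ P ∩ Q', x w u < 2 / 3}).ncard : ℝ) := by
    exact_mod_cast Set.ncard_le_ncard hsub2 (hfin _)
  have hpos : 0 < ((P ∩ Q).ncard : ℝ) := by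
    have : 0 < (P ∩ Q).ncard := (Set.ncard_pos (P ∩ Q).toFinite).mpr ⟨p, hp⟩
    exact_mod_cast this
  nlinarith [hc1.trans_lt h1, hc2.trans_lt h2]
end

section
/- Let Q ⊆ V, v ∈ Q with max_{u∈Q} x(v,u) ≥ 1/3, and let (Q1, Q2) with v ∈ Q1 be the pair returned by One-Third-Refine-Cut(Q, v, x). Then Σ over pairs {i,j} ∈ NFPrs(Q1,Q2) with i ∈ Q1 and j ∈ Q2 ∩ B_{1/2} of ( min(x(v,j), 1/3) − x(v,i) ) is at least (1/6) times the number of such pairs. -/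
open Finset
open scoped Classical

/-- `cutBall x v Q r` is the set of elements of `Q` at distance `< r` from `v`. -/
noncomputable def cutBall {V : Type*} [DecidableEq V]
    (x : V → V → ℝ) (v : V) (Q : Finset V) (r : ℝ) : Finset V :=
  Q.filter fun u => x v u < r

/-- The procedure One-Third-Refine-Cut: it returns `({v}, Q ∖ {v})` if
`Σ_{q∈B_{1/3}} x(v,q) ≥ (1/3)|B_{1/3}| − (1/6)|B_{1/2}| − 1/6`,
and `(B_{1/3}, Q ∖ B_{1/3})` otherwise. -/
noncomputable def oneThirdCut {V : Type*} [DecidableEq V]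
    (x : V → V → ℝ) (Q : Finset V) (v : V) : Finset V × Finset V :=
  if (1 / 3 : ℝ) * (cutBall x v Q (1 / 3)).card
        - (1 / 6) * (cutBall x v Q (1 / 2)).card - 1 / 6
      ≤ ∑ q ∈ cutBall x v Q (1 / 3), x v q
  then ({v}, Q \ {v})
  else (cutBall x v Q (1 / 3), Q \ cutBall x v Q (1 / 3))

/-- A pair `{i,j}` is forbidden when it is a non-edge pair of distance one. -/
def Forbidden {V : Type*} (E : V → V → Prop) (x : V → V → ℝ) (i j : V) : Prop :=
  ¬ E i j ∧ x i j = 1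

/-- Average distance of non-forbidden cut pairs (Lemma 4.4): for the pair
`(Q1, Q2)` returned by One-Third-Refine-Cut, the sum of
`min(x(v,j), 1/3) − x(v,i)` over the non-forbidden pairs `{i,j}` with `i ∈ Q1`
and `j ∈ Q2 ∩ B_{1/2}` is at least `1/6` times the number of such pairs. -/
theorem stmt5 {V : Type*} [Fintype V] [DecidableEq V]
    (x : V → V → ℝ)
    (hsym : ∀ u w, x u w = x w u) (hdiag : ∀ u, x u u = 0)
    (hnn : ∀ u w, 0 ≤ x u w) (hub : ∀ u w, x u w ≤ 1)
    (htri : ∀ u w p, x u w ≤ x u p + x p w)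
    (E : V → V → Prop) (hEsym : ∀ u w, E u w ↔ E w u) (hEirr : ∀ u, ¬ E u u)
    (Q : Finset V) (v : V) (hv : v ∈ Q) (hmax : ∃ u ∈ Q, 1 / 3 ≤ x v u)
    (Q1 Q2 : Finset V) (hcut : (Q1, Q2) = oneThirdCut x Q v) :
    (1 / 6 : ℝ) *
        ((Q1 ×ˢ (Q2 ∩ cutBall x v Q (1 / 2))).filter
            (fun p => ¬ Forbidden E x p.1 p.2)).card
      ≤ ∑ p ∈ (Q1 ×ˢ (Q2 ∩ cutBall x v Q (1 / 2))).filter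
            (fun p => ¬ Forbidden E x p.1 p.2),
          (min (x v p.2) (1 / 3) - x v p.1) := by
  classical
  set B13 := cutBall x v Q (1/3) with hB13
  set B12 := cutBall x v Q (1/2) with hB12
  have hmem13 : ∀ u, u ∈ B13 ↔ u ∈ Q ∧ x v u < 1/3 := by
    intro u; simp [hB13, cutBall]
  have hmem12 : ∀ u, u ∈ B12 ↔ u ∈ Q ∧ x v u < 1/2 := by
    intro u; simp [hB12, cutBall]
  have hsub : B13 ⊆ B12 := by
    intro u hu
    rw [hmem13] at hu; rw [hmem12]
    exact ⟨hu.1, by linarith [hu.2]⟩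
  have hvB13 : v ∈ B13 := by rw [hmem13]; exact ⟨hv, by rw [hdiag]; norm_num⟩
  have hvB12 : v ∈ B12 := hsub hvB13
  unfold oneThirdCut at hcut
  rw [← hB13, ← hB12] at hcut
  split_ifs at hcut with hcond
  · -- case Q1 = {v}
    rw [Prod.mk.injEq] at hcut
    obtain ⟨hQ1, hQ2⟩ := hcut
    have hS : Q2 ∩ B12 = B12.erase v := by
      ext u
      simp only [hQ2, mem_inter, mem_sdiff, mem_singleton, mem_erase]
      constructor
      · rintro ⟨⟨_, hne⟩, hu⟩; exact ⟨hne, hu⟩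
      · rintro ⟨hne, hu⟩; exact ⟨⟨((hmem12 u).1 hu).1, hne⟩, hu⟩
    have hfilt : ∀ p ∈ Q1 ×ˢ (Q2 ∩ B12), ¬ Forbidden E x p.1 p.2 := by
      rintro ⟨i, j⟩ hp ⟨_, heq⟩
      rw [mem_product, hQ1, mem_singleton, hS, mem_erase] at hp
      have hj : x v j < 1/2 := ((hmem12 j).1 hp.2.2).2
      rw [hp.1] at heq
      exact absurd heq (by simp only []; linarith)
    rw [Finset.filter_true_of_mem hfilt]
    rw [Finset.sum_product, hQ1, Finset.sum_singleton, Finset.card_product,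
      Finset.card_singleton, one_mul, hS]
    rw [Finset.sum_erase_eq_sub hvB12, Finset.card_erase_of_mem hvB12]
    have hb1 : 1 ≤ B12.card := Finset.card_pos.2 ⟨v, hvB12⟩
    have hcard : ((B12.card - 1 : ℕ) : ℝ) = (B12.card : ℝ) - 1 := by
      push_cast [hb1]; ring
    rw [hcard]
    have hfv : min (x v ((v, v) : V × V).2) (1/3) - x v ((v, v) : V × V).1 = 0 := by
      simp [hdiag]
    have hsplit : ∑ j ∈ B12, (min (x v j) (1/3) - x v v)
        = (∑ j ∈ B13, x v j) + (1/3) * ((B12.card : ℝ) - (B13.card : ℝ)) := by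
      rw [← Finset.sum_sdiff hsub]
      have h1 : ∑ j ∈ B13, (min (x v j) (1/3) - x v v) = ∑ j ∈ B13, x v j := by
        apply Finset.sum_congr rfl
        intro j hj
        have := ((hmem13 j).1 hj).2
        rw [hdiag, min_eq_left (by linarith)]; ring
      have h2 : ∑ j ∈ B12 \ B13, (min (x v j) (1/3) - x v v)
          = (1/3) * (((B12 \ B13).card : ℕ) : ℝ) := by
        have hc : ∀ j ∈ B12 \ B13, (min (x v j) (1/3) - x v v) = (1/3 : ℝ) := by
          intro j hj
          simp only [mem_sdiff, hmem12, hmem13, not_and, not_lt] at hj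
          have hge : (1/3 : ℝ) ≤ x v j := hj.2 hj.1.1
          rw [hdiag, min_eq_right hge]; ring
        rw [Finset.sum_congr rfl hc, Finset.sum_const, nsmul_eq_mul, mul_comm]
      rw [h1, h2, Finset.cast_card_sdiff hsub]
      ring
    rw [hsplit]
    have hmono : (B13.card : ℝ) ≤ (B12.card : ℝ) := by
      exact_mod_cast Finset.card_le_card hsub
    rw [hfv]
    linarith [hcond]
  · -- case Q1 = B13
    rw [Prod.mk.injEq] at hcut
    obtain ⟨hQ1, hQ2⟩ := hcut
    push_neg at hcond
    have hS : Q2 ∩ B12 = B12 \ B13 := by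
      ext u
      simp only [hQ2, mem_inter, mem_sdiff]
      constructor
      · rintro ⟨⟨_, hne⟩, hu⟩; exact ⟨hu, hne⟩
      · rintro ⟨hu, hne⟩; exact ⟨⟨((hmem12 u).1 hu).1, hne⟩, hu⟩
    have hfilt : ∀ p ∈ Q1 ×ˢ (Q2 ∩ B12), ¬ Forbidden E x p.1 p.2 := by
      rintro ⟨i, j⟩ hp ⟨_, heq⟩
      rw [mem_product, hQ1, hS, mem_sdiff] at hp
      have hi : x v i < 1/3 := ((hmem13 i).1 hp.1).2
      have hj : x v j < 1/2 := ((hmem12 j).1 hp.2.1).2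
      have h1 : x i j ≤ x i v + x v j := htri i j v
      have h2 : x i v = x v i := hsym i v
      have heq' : x i j = 1 := heq
      linarith
    rw [Finset.filter_true_of_mem hfilt, hS, hQ1]
    have hterm : ∀ p ∈ B13 ×ˢ (B12 \ B13),
        min (x v p.2) (1/3) - x v p.1 = 1/3 - x v p.1 := by
      rintro ⟨i, j⟩ hp
      simp only [mem_product, mem_sdiff, hmem12, hmem13, not_and, not_lt] at hp
      have hge : (1/3 : ℝ) ≤ x v j := hp.2.2 hp.2.1.1
      simp only [min_eq_right hge]
    rw [Finset.sum_congr rfl hterm, Finset.sum_product, Finset.card_product]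
    have hinner : ∀ i ∈ B13, ∑ _j ∈ B12 \ B13, ((1:ℝ)/3 - x v i)
        = (((B12 \ B13).card : ℕ) : ℝ) * (1/3 - x v i) := by
      intro i _; rw [Finset.sum_const, nsmul_eq_mul]
    rw [Finset.sum_congr rfl hinner, ← Finset.mul_sum, Finset.sum_sub_distrib,
      Finset.sum_const, nsmul_eq_mul]
    push_cast
    have hmono : ((B13.card : ℕ) : ℝ) ≤ ((B12.card : ℕ) : ℝ) := by
      exact_mod_cast Finset.card_le_card hsub
    have hs : (0:ℝ) ≤ (((B12 \ B13).card : ℕ) : ℝ) := by positivity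
    nlinarith [hcond, hmono, hs]
end

section
/- Let Q ⊆ V, v ∈ Q with max_{u∈Q} x(v,u) ≥ 1/3, let (Q1, Q2) with v ∈ Q1 be the pair returned by One-Third-Refine-Cut(Q, v, x), and set Q2' := Q2 ∩ B_{1/2}. Then (1/6)·|NFPrs(Q1,Q2)| ≤ Σ_{ {i,j}∈NFPrs(Q1,Q2), i∈Q1, j∈Q2' } ( min(x(v,j),1/3) − x(v,i) ) + Σ_{ {i,j}∈NFPrs(Q1,Q2), i∈Q1, j∈Q2∖Q2', {i,j}∈E } x(i,j) + (1/6)·|{ {i,j}∈NFPrs(Q1,Q2) : i∈Q1, j∈Q2∖Q2', {i,j}∈NE }|. -/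
open Finset
open scoped Classical

private lemma mem_cutBall {V : Type*} [DecidableEq V]
    {x : V → V → ℝ} {v : V} {Q : Finset V} {r : ℝ} {u : V} :
    u ∈ cutBall x v Q r ↔ u ∈ Q ∧ x v u < r := by
  simp [cutBall]

private lemma master {V : Type*} [DecidableEq V]
    (x : V → V → ℝ) (htri : ∀ u w p, x u w ≤ x u p + x p w)
    (E : V → V → Prop) (Q : Finset V) (v : V) (Q1 Q2 : Finset V)
    (hQ2sub : Q2 ⊆ Q) (hQ1x : ∀ i ∈ Q1, x v i ≤ 1 / 3)
    (hA : (1 / 6 : ℝ) *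
        ((Q1 ×ˢ (Q2 ∩ cutBall x v Q (1 / 2))).filter
          (fun p => ¬ Forbidden E x p.1 p.2)).card
      ≤ ∑ p ∈ (Q1 ×ˢ (Q2 ∩ cutBall x v Q (1 / 2))).filter
            (fun p => ¬ Forbidden E x p.1 p.2),
          (min (x v p.2) (1 / 3) - x v p.1)) :
    (1 / 6 : ℝ) * ((Q1 ×ˢ Q2).filter (fun p => ¬ Forbidden E x p.1 p.2)).card
      ≤ (∑ p ∈ (Q1 ×ˢ (Q2 ∩ cutBall x v Q (1 / 2))).filter
            (fun p => ¬ Forbidden E x p.1 p.2),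
          (min (x v p.2) (1 / 3) - x v p.1))
        + (∑ p ∈ (Q1 ×ˢ (Q2 \ (Q2 ∩ cutBall x v Q (1 / 2)))).filter
              (fun p => ¬ Forbidden E x p.1 p.2 ∧ E p.1 p.2),
            x p.1 p.2)
        + (1 / 6 : ℝ) *
            ((Q1 ×ˢ (Q2 \ (Q2 ∩ cutBall x v Q (1 / 2)))).filter
              (fun p => ¬ Forbidden E x p.1 p.2 ∧ ¬ E p.1 p.2)).card := by
  classical
  set T := Q2 ∩ cutBall x v Q (1 / 2) with hT
  set D := Q2 \ T with hD
  have hprod : Q1 ×ˢ Q2 = Q1 ×ˢ T ∪ Q1 ×ˢ D := by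
    rw [← Finset.product_union, Finset.union_sdiff_of_subset Finset.inter_subset_left]
  have hdisj : Disjoint ((Q1 ×ˢ T).filter (fun p => ¬ Forbidden E x p.1 p.2))
      ((Q1 ×ˢ D).filter (fun p => ¬ Forbidden E x p.1 p.2)) := by
    simp only [Finset.disjoint_left, Finset.mem_filter, Finset.mem_product, hD,
      Finset.mem_sdiff]
    rintro p ⟨⟨-, hpT⟩, -⟩ ⟨⟨-, -, hpD⟩, -⟩
    exact hpD hpT
  have hcard1 : ((Q1 ×ˢ Q2).filter (fun p => ¬ Forbidden E x p.1 p.2)).card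
      = ((Q1 ×ˢ T).filter (fun p => ¬ Forbidden E x p.1 p.2)).card
        + ((Q1 ×ˢ D).filter (fun p => ¬ Forbidden E x p.1 p.2)).card := by
    rw [hprod, Finset.filter_union, Finset.card_union_of_disjoint hdisj]
  have hcard2 : ((Q1 ×ˢ D).filter (fun p => ¬ Forbidden E x p.1 p.2)).card
      = ((Q1 ×ˢ D).filter (fun p => ¬ Forbidden E x p.1 p.2 ∧ E p.1 p.2)).card
        + ((Q1 ×ˢ D).filter (fun p => ¬ Forbidden E x p.1 p.2 ∧ ¬ E p.1 p.2)).card := by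
    rw [← Finset.filter_filter, ← Finset.filter_filter,
      Finset.card_filter_add_card_filter_not]
  have hB : (1 / 6 : ℝ) *
      ((Q1 ×ˢ D).filter (fun p => ¬ Forbidden E x p.1 p.2 ∧ E p.1 p.2)).card
      ≤ ∑ p ∈ (Q1 ×ˢ D).filter (fun p => ¬ Forbidden E x p.1 p.2 ∧ E p.1 p.2),
          x p.1 p.2 := by
    have hpt : ∀ p ∈ (Q1 ×ˢ D).filter (fun p => ¬ Forbidden E x p.1 p.2 ∧ E p.1 p.2),
        (1 / 6 : ℝ) ≤ x p.1 p.2 := by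
      intro p hp
      simp only [Finset.mem_filter, Finset.mem_product, hD, Finset.mem_sdiff, hT,
        Finset.mem_inter, not_and] at hp
      obtain ⟨⟨hp1, hp2, hp2'⟩, -, -⟩ := hp
      have hpB : p.2 ∉ cutBall x v Q (1 / 2) := hp2' hp2
      have hx2 : (1 / 2 : ℝ) ≤ x v p.2 := by
        by_contra h
        exact hpB (mem_cutBall.2 ⟨hQ2sub hp2, not_le.1 h⟩)
      have h1 := htri v p.2 p.1
      have h2 := hQ1x p.1 hp1
      linarith
    have hsum := Finset.sum_le_sum hpt
    rw [Finset.sum_const, nsmul_eq_mul] at hsum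
    linarith
  rw [hcard1, hcard2]
  push_cast
  linarith

/-- Corollary 4.5: with `(Q1, Q2)` returned by One-Third-Refine-Cut and
`Q2' := Q2 ∩ B_{1/2}`,
`(1/6)·|NFPrs(Q1,Q2)|` is at most the sum over non-forbidden pairs with
`i ∈ Q1, j ∈ Q2'` of `min(x(v,j),1/3) − x(v,i)`, plus the sum of `x(i,j)` over
non-forbidden edge pairs with `i ∈ Q1, j ∈ Q2 ∖ Q2'`, plus `1/6` times the
number of non-forbidden non-edge pairs with `i ∈ Q1, j ∈ Q2 ∖ Q2'`. -/
theorem stmt6 {V : Type*} [Fintype V] [DecidableEq V]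
    (x : V → V → ℝ)
    (hsym : ∀ u w, x u w = x w u) (hdiag : ∀ u, x u u = 0)
    (hnn : ∀ u w, 0 ≤ x u w) (hub : ∀ u w, x u w ≤ 1)
    (htri : ∀ u w p, x u w ≤ x u p + x p w)
    (E : V → V → Prop) (hEsym : ∀ u w, E u w ↔ E w u) (hEirr : ∀ u, ¬ E u u)
    (Q : Finset V) (v : V) (hv : v ∈ Q) (hmax : ∃ u ∈ Q, 1 / 3 ≤ x v u)
    (Q1 Q2 : Finset V) (hcut : (Q1, Q2) = oneThirdCut x Q v) :
    (1 / 6 : ℝ) * ((Q1 ×ˢ Q2).filter (fun p => ¬ Forbidden E x p.1 p.2)).card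
      ≤ (∑ p ∈ (Q1 ×ˢ (Q2 ∩ cutBall x v Q (1 / 2))).filter
            (fun p => ¬ Forbidden E x p.1 p.2),
          (min (x v p.2) (1 / 3) - x v p.1))
        + (∑ p ∈ (Q1 ×ˢ (Q2 \ (Q2 ∩ cutBall x v Q (1 / 2)))).filter
              (fun p => ¬ Forbidden E x p.1 p.2 ∧ E p.1 p.2),
            x p.1 p.2)
        + (1 / 6 : ℝ) *
            ((Q1 ×ˢ (Q2 \ (Q2 ∩ cutBall x v Q (1 / 2)))).filter
              (fun p => ¬ Forbidden E x p.1 p.2 ∧ ¬ E p.1 p.2)).card := by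
  classical
  have hsub : cutBall x v Q (1 / 3) ⊆ cutBall x v Q (1 / 2) := by
    intro u hu
    obtain ⟨h1, h2⟩ := mem_cutBall.1 hu
    exact mem_cutBall.2 ⟨h1, by linarith⟩
  have hvB12 : v ∈ cutBall x v Q (1 / 2) := mem_cutBall.2 ⟨hv, by rw [hdiag]; norm_num⟩
  by_cases hcond : (1 / 3 : ℝ) * (cutBall x v Q (1 / 3)).card
        - (1 / 6) * (cutBall x v Q (1 / 2)).card - 1 / 6
      ≤ ∑ q ∈ cutBall x v Q (1 / 3), x v q
  · rw [oneThirdCut, if_pos hcond, Prod.mk.injEq] at hcut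
    obtain ⟨hQ1, hQ2⟩ := hcut
    subst hQ1; subst hQ2
    apply master x htri E Q v _ _ Finset.sdiff_subset
    · intro i hi
      rw [Finset.mem_singleton] at hi
      subst hi
      rw [hdiag]; norm_num
    · -- case 1 core inequality
      have hT'eq : (Q \ {v}) ∩ cutBall x v Q (1 / 2) = (cutBall x v Q (1 / 2)).erase v := by
        ext j
        simp only [Finset.mem_inter, Finset.mem_sdiff, Finset.mem_singleton,
          Finset.mem_erase]
        constructor
        · rintro ⟨⟨hjQ, hjv⟩, hjB⟩; exact ⟨hjv, hjB⟩
        · rintro ⟨hjv, hjB⟩; exact ⟨⟨(mem_cutBall.1 hjB).1, hjv⟩, hjB⟩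
      have hfilter : (({v} ×ˢ ((Q \ {v}) ∩ cutBall x v Q (1 / 2))).filter
            (fun p : V × V => ¬ Forbidden E x p.1 p.2))
          = {v} ×ˢ ((Q \ {v}) ∩ cutBall x v Q (1 / 2)) := by
        apply Finset.filter_true_of_mem
        intro p hp
        rw [Finset.mem_product, Finset.mem_singleton] at hp
        obtain ⟨hp1, hp2⟩ := hp
        have h2 : x v p.2 < 1 / 2 := (mem_cutBall.1 (Finset.mem_inter.1 hp2).2).2
        rintro ⟨-, heq⟩
        rw [hp1] at heq
        linarith
      rw [hfilter, Finset.card_product, Finset.card_singleton, one_mul,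
        Finset.sum_product, Finset.sum_singleton]
      simp only [hdiag, sub_zero]
      rw [hT'eq]
      rw [Finset.sum_erase (f := fun j => min (x v j) (1 / 3 : ℝ)) (a := v) _
        (by simp [hdiag])]
      rw [Finset.card_erase_of_mem hvB12]
      have hsum12 : ∑ j ∈ cutBall x v Q (1 / 2), min (x v j) (1 / 3)
          = (((cutBall x v Q (1 / 2)).card - (cutBall x v Q (1 / 3)).card : ℕ) : ℝ) * (1 / 3)
            + ∑ q ∈ cutBall x v Q (1 / 3), x v q := by
        rw [← Finset.sum_sdiff hsub]
        congr 1
        · rw [Finset.sum_congr rfl (fun j hj => ?_), Finset.sum_const, nsmul_eq_mul,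
            Finset.card_sdiff_of_subset hsub]
          obtain ⟨hjB, hjn⟩ := Finset.mem_sdiff.1 hj
          refine min_eq_right ?_
          by_contra h
          exact hjn (mem_cutBall.2 ⟨(mem_cutBall.1 hjB).1, not_le.1 h⟩)
        · exact Finset.sum_congr rfl fun j hj => min_eq_left (le_of_lt (mem_cutBall.1 hj).2)
      rw [hsum12]
      have h1 : 1 ≤ (cutBall x v Q (1 / 2)).card := Finset.card_pos.2 ⟨v, hvB12⟩
      have h2 : (cutBall x v Q (1 / 3)).card ≤ (cutBall x v Q (1 / 2)).card :=
        Finset.card_le_card hsub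
      rw [Nat.cast_sub h1, Nat.cast_sub h2]
      push_cast
      linarith
  · rw [oneThirdCut, if_neg hcond, Prod.mk.injEq] at hcut
    obtain ⟨hQ1, hQ2⟩ := hcut
    subst hQ1; subst hQ2
    apply master x htri E Q v _ _ Finset.sdiff_subset
    · intro i hi
      exact le_of_lt (mem_cutBall.1 hi).2
    · -- case 2 core inequality
      rw [not_le] at hcond
      set B13 := cutBall x v Q (1 / 3) with hB13
      set T' := (Q \ B13) ∩ cutBall x v Q (1 / 2) with hT'
      have hfilter : ((B13 ×ˢ T').filter (fun p : V × V => ¬ Forbidden E x p.1 p.2))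
          = B13 ×ˢ T' := by
        apply Finset.filter_true_of_mem
        intro p hp
        rw [Finset.mem_product] at hp
        obtain ⟨hp1, hp2⟩ := hp
        have h1 : x v p.1 < 1 / 3 := (mem_cutBall.1 hp1).2
        have h2 : x v p.2 < 1 / 2 := (mem_cutBall.1 (Finset.mem_inter.1 hp2).2).2
        rintro ⟨-, heq⟩
        have h3 := htri p.1 p.2 v
        rw [hsym p.1 v] at h3
        linarith
      rw [hfilter, Finset.card_product, Finset.sum_product]
      have hmin : ∀ j ∈ T', min (x v j) (1 / 3 : ℝ) = 1 / 3 := by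
        intro j hj
        obtain ⟨hjQ, hjB⟩ := Finset.mem_inter.1 hj
        obtain ⟨hjQ', hjn⟩ := Finset.mem_sdiff.1 hjQ
        refine min_eq_right ?_
        by_contra h
        exact hjn (mem_cutBall.2 ⟨hjQ', not_le.1 h⟩)
      have hinner : ∀ i ∈ B13, ∑ j ∈ T', (min (x v j) (1 / 3 : ℝ) - x v i)
          = (T'.card : ℝ) * (1 / 3 - x v i) := by
        intro i hi
        rw [Finset.sum_congr rfl (fun j hj => by rw [hmin j hj]), Finset.sum_const,
          nsmul_eq_mul]
      rw [Finset.sum_congr rfl hinner, ← Finset.mul_sum]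
      have hsumi : ∑ i ∈ B13, ((1 : ℝ) / 3 - x v i)
          = (B13.card : ℝ) * (1 / 3) - ∑ q ∈ B13, x v q := by
        rw [Finset.sum_sub_distrib, Finset.sum_const, nsmul_eq_mul]
      rw [hsumi]
      have hcards : (B13.card : ℝ) ≤ ((cutBall x v Q (1 / 2)).card : ℝ) := by
        exact_mod_cast Finset.card_le_card hsub
      have key : (1 / 6 : ℝ) * B13.card ≤ (B13.card : ℝ) * (1 / 3) - ∑ q ∈ B13, x v q := by
        linarith
      have h0 : (0 : ℝ) ≤ (T'.card : ℝ) := Nat.cast_nonneg _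
      push_cast
      nlinarith [mul_le_mul_of_nonneg_left key h0]
end

section
/- Let Q ⊆ V, v ∈ Q with max_{u∈Q} x(v,u) ≥ 1/3, and let (Q1, Q2) with v ∈ Q1 be the pair returned by One-Third-Refine-Cut(Q, v, x). Then Σ_{ {i,j}∈NFPrs(Q1,Q2), {i,j}∈E } x(i,j) + Σ_{ {i,j}∈NFPrs(Q1,Q2), {i,j}∈NE } (1 − x(i,j)) ≥ (1/6)·|{ {i,j} ∈ NFPrs(Q1,Q2) : {i,j} ∈ E }|. -/
open Finset
open scoped Classical

/-- The net contribution of the pair `p` to the quantity of Lemma 4.6. -/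
noncomputable def gval {V : Type*} (E : V → V → Prop) (x : V → V → ℝ) (p : V × V) : ℝ :=
  if E p.1 p.2 then x p.1 p.2 - 1/6 else if x p.1 p.2 = 1 then 0 else 1 - x p.1 p.2

/-- Lemma 4.6: for the pair `(Q1, Q2)` returned by One-Third-Refine-Cut,
`Σ_{{i,j}∈NFPrs(Q1,Q2)∩E} x(i,j) + Σ_{{i,j}∈NFPrs(Q1,Q2)∩NE} (1 − x(i,j))`
is at least `1/6` times the number of non-forbidden edge pairs between
`Q1` and `Q2`. -/
theorem stmt7 {V : Type*} [Fintype V] [DecidableEq V]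
    (x : V → V → ℝ)
    (hsym : ∀ u w, x u w = x w u) (hdiag : ∀ u, x u u = 0)
    (hnn : ∀ u w, 0 ≤ x u w) (hub : ∀ u w, x u w ≤ 1)
    (htri : ∀ u w p, x u w ≤ x u p + x p w)
    (E : V → V → Prop) (hEsym : ∀ u w, E u w ↔ E w u) (hEirr : ∀ u, ¬ E u u)
    (Q : Finset V) (v : V) (hv : v ∈ Q) (hmax : ∃ u ∈ Q, 1 / 3 ≤ x v u)
    (Q1 Q2 : Finset V) (hcut : (Q1, Q2) = oneThirdCut x Q v) :
    (1 / 6 : ℝ) *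
        ((Q1 ×ˢ Q2).filter (fun p => ¬ Forbidden E x p.1 p.2 ∧ E p.1 p.2)).card
      ≤ (∑ p ∈ (Q1 ×ˢ Q2).filter (fun p => ¬ Forbidden E x p.1 p.2 ∧ E p.1 p.2),
            x p.1 p.2)
        + ∑ p ∈ (Q1 ×ˢ Q2).filter (fun p => ¬ Forbidden E x p.1 p.2 ∧ ¬ E p.1 p.2),
            (1 - x p.1 p.2) := by
  classical
  -- Step 1: reduce to nonnegativity of ∑ gval.
  have expand : ∑ p ∈ Q1 ×ˢ Q2, gval E x p
      = (∑ p ∈ (Q1 ×ˢ Q2).filter (fun p => ¬ Forbidden E x p.1 p.2 ∧ E p.1 p.2),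
            x p.1 p.2)
        + (∑ p ∈ (Q1 ×ˢ Q2).filter (fun p => ¬ Forbidden E x p.1 p.2 ∧ ¬ E p.1 p.2),
            (1 - x p.1 p.2))
        - (1 / 6 : ℝ) *
          ((Q1 ×ˢ Q2).filter (fun p => ¬ Forbidden E x p.1 p.2 ∧ E p.1 p.2)).card := by
    have hcardsum : (1 / 6 : ℝ) *
        ((Q1 ×ˢ Q2).filter (fun p => ¬ Forbidden E x p.1 p.2 ∧ E p.1 p.2)).card
        = ∑ p ∈ Q1 ×ˢ Q2,
            (if ¬ Forbidden E x p.1 p.2 ∧ E p.1 p.2 then (1/6 : ℝ) else 0) := by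
      rw [← Finset.sum_filter, Finset.sum_const, nsmul_eq_mul]; ring
    rw [Finset.sum_filter, Finset.sum_filter, hcardsum, ← Finset.sum_add_distrib,
      ← Finset.sum_sub_distrib]
    apply Finset.sum_congr rfl
    intro p _
    by_cases hE : E p.1 p.2
    · have hnf : ¬ Forbidden E x p.1 p.2 := fun h => h.1 hE
      simp [gval, hE, hnf]
    · by_cases hx : x p.1 p.2 = 1
      · have hf : Forbidden E x p.1 p.2 := ⟨hE, hx⟩
        simp [gval, hE, hx, hf]
      · have hnf : ¬ Forbidden E x p.1 p.2 := fun h => hx h.2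
        simp [gval, hE, hx, hnf]
  suffices hpos : 0 ≤ ∑ p ∈ Q1 ×ˢ Q2, gval E x p by linarith
  -- notation for the balls
  have hB13Q : cutBall x v Q (1/3) ⊆ Q := Finset.filter_subset _ _
  have hB12Q : cutBall x v Q (1/2) ⊆ Q := Finset.filter_subset _ _
  have hsub : cutBall x v Q (1/3) ⊆ cutBall x v Q (1/2) := by
    intro u hu
    simp only [cutBall, Finset.mem_filter] at hu ⊢
    exact ⟨hu.1, by linarith [hu.2]⟩
  have hvB : v ∈ cutBall x v Q (1/3) := by
    simp only [cutBall, Finset.mem_filter]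
    exact ⟨hv, by rw [hdiag]; norm_num⟩
  unfold oneThirdCut at hcut
  split_ifs at hcut with hcond
  · -- Case 1: Q1 = {v}, Q2 = Q \ {v}
    rw [Prod.mk.injEq] at hcut
    obtain ⟨hQ1, hQ2⟩ := hcut
    subst hQ1; subst hQ2
    rw [Finset.sum_product, Finset.sum_singleton]
    set F : V → ℝ := fun j =>
      (if j ∈ cutBall x v Q (1/3) then x v j - 1/3 else 0)
      + (if j ∈ cutBall x v Q (1/2) then (1/6 : ℝ) else 0) with hF
    have hpt : ∀ j ∈ Q \ {v}, F j ≤ gval E x (v, j) := by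
      intro j hj
      rw [Finset.mem_sdiff, Finset.mem_singleton] at hj
      by_cases h13 : j ∈ cutBall x v Q (1/3)
      · have hx13 : x v j < 1/3 := (Finset.mem_filter.mp h13).2
        have h12 : j ∈ cutBall x v Q (1/2) := hsub h13
        have hFv : F j = x v j - 1/6 := by
          simp only [hF]
          rw [if_pos h13, if_pos h12]; ring
        rw [hFv]
        by_cases hE : E v j
        · simp [gval, hE]
        · have hx1 : x v j ≠ 1 := by intro h; rw [h] at hx13; norm_num at hx13
          simp only [gval, if_neg hE, if_neg hx1]
          linarith
      · have hx13 : (1:ℝ)/3 ≤ x v j := by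
          by_contra h
          exact h13 (Finset.mem_filter.mpr ⟨hj.1, by push_neg at h; linarith⟩)
        by_cases h12 : j ∈ cutBall x v Q (1/2)
        · have hx12 : x v j < 1/2 := (Finset.mem_filter.mp h12).2
          have hFv : F j = 1/6 := by
            simp only [hF]
            rw [if_neg h13, if_pos h12]; ring
          rw [hFv]
          by_cases hE : E v j
          · simp only [gval, if_pos hE]; linarith
          · have hx1 : x v j ≠ 1 := by intro h; rw [h] at hx12; norm_num at hx12
            simp only [gval, if_neg hE, if_neg hx1]
            linarith
        · have hx12 : (1:ℝ)/2 ≤ x v j := by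
            by_contra h
            exact h12 (Finset.mem_filter.mpr ⟨hj.1, by push_neg at h; linarith⟩)
          have hFv : F j = 0 := by
            simp only [hF]
            rw [if_neg h13, if_neg h12]; ring
          rw [hFv]
          by_cases hE : E v j
          · simp only [gval, if_pos hE]; linarith
          · by_cases hx1 : x v j = 1
            · simp [gval, hE, hx1]
            · simp only [gval, if_neg hE, if_neg hx1]
              linarith [hub v j]
    have hQsum : ∑ j ∈ Q, F j
        = (∑ q ∈ cutBall x v Q (1/3), x v q)
          - (1/3) * (cutBall x v Q (1/3)).card
          + (1/6) * (cutBall x v Q (1/2)).card := by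
      rw [hF]
      rw [Finset.sum_add_distrib, Finset.sum_ite_mem, Finset.sum_ite_mem,
        Finset.inter_eq_right.mpr hB13Q, Finset.inter_eq_right.mpr hB12Q,
        Finset.sum_sub_distrib, Finset.sum_const, Finset.sum_const,
        nsmul_eq_mul, nsmul_eq_mul]
      ring
    have hFv0 : F v = -(1/6) := by
      simp only [hF]
      rw [if_pos hvB, if_pos (hsub hvB), hdiag v]; ring
    have hsplit : ∑ j ∈ Q \ {v}, F j = ∑ j ∈ Q, F j - F v := by
      rw [← Finset.erase_eq]
      have := Finset.sum_erase_add Q F hv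
      linarith
    have hFsum : 0 ≤ ∑ j ∈ Q \ {v}, F j := by
      rw [hsplit, hQsum, hFv0]
      have := hcond
      push_cast at this ⊢
      linarith
    calc (0:ℝ) ≤ ∑ j ∈ Q \ {v}, F j := hFsum
      _ ≤ ∑ j ∈ Q \ {v}, gval E x (v, j) := Finset.sum_le_sum hpt
  · -- Case 2: Q1 = B13, Q2 = Q \ B13
    push_neg at hcond
    rw [Prod.mk.injEq] at hcut
    obtain ⟨hQ1, hQ2⟩ := hcut
    subst hQ1; subst hQ2
    rw [Finset.sum_product, Finset.sum_comm]
    apply Finset.sum_nonneg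
    intro j hj
    rw [Finset.mem_sdiff] at hj
    have hx13 : (1:ℝ)/3 ≤ x v j := by
      by_contra h
      exact hj.2 (Finset.mem_filter.mpr ⟨hj.1, by push_neg at h; linarith⟩)
    have hcard : ((cutBall x v Q (1/3)).card : ℝ) ≤ (cutBall x v Q (1/2)).card := by
      exact_mod_cast Finset.card_le_card hsub
    by_cases hj2 : x v j < 1/2
    · -- 1/3 ≤ x v j < 1/2
      have hpt : ∀ i ∈ cutBall x v Q (1/3), 1/6 - x v i ≤ gval E x (i, j) := by
        intro i hi
        have hxi : x v i < 1/3 := (Finset.mem_filter.mp hi).2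
        have hlow : x v j ≤ x v i + x i j := htri v j i
        have hup : x i j ≤ x v i + x v j := by
          have := htri i j v
          rw [hsym i v] at this
          linarith
        by_cases hE : E i j
        · simp only [gval, if_pos hE]; linarith
        · have hx1 : x i j ≠ 1 := by intro h; rw [h] at hup; linarith
          simp only [gval, if_neg hE, if_neg hx1]
          linarith
      have hlb : ∑ i ∈ cutBall x v Q (1/3), (1/6 - x v i)
          = (1/6) * (cutBall x v Q (1/3)).card - ∑ i ∈ cutBall x v Q (1/3), x v i := by
        rw [Finset.sum_sub_distrib, Finset.sum_const, nsmul_eq_mul]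
        ring
      have h1 : ∑ i ∈ cutBall x v Q (1/3), (1/6 - x v i)
          ≤ ∑ i ∈ cutBall x v Q (1/3), gval E x (i, j) := Finset.sum_le_sum hpt
      rw [hlb] at h1
      linarith
    · -- 1/2 ≤ x v j
      push_neg at hj2
      apply Finset.sum_nonneg
      intro i hi
      have hxi : x v i < 1/3 := (Finset.mem_filter.mp hi).2
      have hlow : x v j ≤ x v i + x i j := htri v j i
      by_cases hE : E i j
      · simp only [gval, if_pos hE]; linarith
      · by_cases hx1 : x i j = 1
        · simp [gval, hE, hx1]
        · simp only [gval, if_neg hE, if_neg hx1]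
          linarith [hub i j]
end

section
/- Let Q be any partition of V obtained from the trivial partition {V} by a finite sequence of refinement steps, each of which picks a part Q with some v ∈ Q satisfying max_{u∈Q} x(v,u) ≥ 1/3 and replaces Q by the two parts returned by One-Third-Refine-Cut(Q, v, x). Let NFPrs(Q) be the set of non-forbidden pairs whose two elements lie in different parts of Q. Then Σ_{ {i,j}∈NFPrs(Q), {i,j}∈E } x(i,j) + Σ_{ {i,j}∈NFPrs(Q), {i,j}∈NE } (1 − x(i,j)) + (1/6)·|{ {i,j}∈NFPrs(Q) : {i,j}∈NE }| ≥ (1/6)·|NFPrs(Q)|. -/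
open Finset
open scoped Classical

/-- The families of sets obtainable from the trivial partition `{V}` by a finite
sequence of refinement steps, each replacing a part `Q` having some `v ∈ Q`
with `max_{u∈Q} x(v,u) ≥ 1/3` by the two parts returned by
One-Third-Refine-Cut. -/
inductive ReachedBy {V : Type*} [Fintype V] [DecidableEq V] (x : V → V → ℝ) :
    Finset (Finset V) → Prop
  | init : ReachedBy x {Finset.univ}
  | step (𝒬 : Finset (Finset V)) (Q : Finset V) (v : V)
      (h𝒬 : ReachedBy x 𝒬) (hQ : Q ∈ 𝒬) (hv : v ∈ Q)
      (hmax : ∃ u ∈ Q, 1 / 3 ≤ x v u) :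
      ReachedBy x (insert (oneThirdCut x Q v).1
        (insert (oneThirdCut x Q v).2 (𝒬.erase Q)))

/-- Both endpoints of the unordered pair `e` lie in a common part of `𝒬`. -/
def InSamePart {V : Type*} (𝒬 : Finset (Finset V)) (e : Sym2 V) : Prop :=
  ∃ u w, e = s(u, w) ∧ ∃ P ∈ 𝒬, u ∈ P ∧ w ∈ P

/-- The unordered pair `e` is an edge pair of the relation `E`. -/
def EdgePair {V : Type*} (E : V → V → Prop) (e : Sym2 V) : Prop :=
  ∃ u w, e = s(u, w) ∧ E u w

section AuxLemmas
variable {V : Type*} [DecidableEq V] (x : V → V → ℝ)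

lemma oneThirdCut_fst_subset (Q : Finset V) (v : V) (hv : v ∈ Q) :
    (oneThirdCut x Q v).1 ⊆ Q := by
  unfold oneThirdCut; split_ifs <;> simp [cutBall, Finset.filter_subset, hv]

lemma oneThirdCut_snd_eq (Q : Finset V) (v : V) :
    (oneThirdCut x Q v).2 = Q \ (oneThirdCut x Q v).1 := by
  unfold oneThirdCut; split_ifs <;> rfl

omit [DecidableEq V] in
lemma inSamePart_iff (𝒬 : Finset (Finset V)) (a b : V) :
    InSamePart 𝒬 s(a, b) ↔ ∃ P ∈ 𝒬, a ∈ P ∧ b ∈ P := by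
  constructor
  · rintro ⟨u, w, he, P, hP, hu, hw⟩
    rw [Sym2.eq_iff] at he
    rcases he with ⟨rfl, rfl⟩ | ⟨rfl, rfl⟩
    · exact ⟨P, hP, hu, hw⟩
    · exact ⟨P, hP, hw, hu⟩
  · rintro ⟨P, hP, ha, hb⟩
    exact ⟨a, b, rfl, P, hP, ha, hb⟩

omit [DecidableEq V] in
lemma edgePair_iff (E : V → V → Prop) (hEsym : ∀ u w, E u w ↔ E w u) (a b : V) :
    EdgePair E s(a, b) ↔ E a b := by
  constructor
  · rintro ⟨u, w, he, hE⟩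
    rw [Sym2.eq_iff] at he
    rcases he with ⟨rfl, rfl⟩ | ⟨rfl, rfl⟩
    · exact hE
    · exact (hEsym _ _).mp hE
  · intro h; exact ⟨a, b, rfl, h⟩

lemma cut_sum_nonneg
    (hsym : ∀ u w, x u w = x w u) (hdiag : ∀ u, x u u = 0)
    (hnn : ∀ u w, 0 ≤ x u w) (hub : ∀ u w, x u w ≤ 1)
    (htri : ∀ u w p, x u w ≤ x u p + x p w)
    (Q : Finset V) (v : V) (hv : v ∈ Q) :
    0 ≤ ∑ a ∈ (oneThirdCut x Q v).1, ∑ b ∈ (oneThirdCut x Q v).2,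
          min (x a b - 1/6) (1 - x a b) := by
  set B1 := cutBall x v Q (1/3) with hB1
  set B2 := cutBall x v Q (1/2) with hB2
  have hB12 : B1 ⊆ B2 := by
    intro b hb
    simp only [hB1, hB2, cutBall, Finset.mem_filter] at *
    exact ⟨hb.1, by linarith [hb.2]⟩
  have hcard : (B1.card : ℝ) ≤ B2.card := by exact_mod_cast Finset.card_le_card hB12
  have hvB1 : v ∈ B1 := by
    simp only [hB1, cutBall, Finset.mem_filter, hdiag v]; exact ⟨hv, by norm_num⟩
  have hcards : ((B2 \ B1).card : ℝ) = B2.card - B1.card := by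
    rw [Finset.card_sdiff_of_subset hB12]; push_cast [Nat.cast_sub (Finset.card_le_card hB12)]; ring
  unfold oneThirdCut
  split_ifs with hif
  all_goals simp only [← hB1, ← hB2] at hif
  · rw [Finset.sum_singleton]
    have hφ : ∀ b ∈ Q \ {v},
        (if x v b < 1/3 then x v b - 1/6 else if x v b < 1/2 then (1/6:ℝ) else 0)
          ≤ min (x v b - 1/6) (1 - x v b) := by
      intro b _
      split_ifs with h1 h2 <;> apply le_min <;> (try push_neg at *) <;>
        first | linarith [hub v b, hnn v b] | linarith [hub v b]
    have hsum := Finset.sum_le_sum hφ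
    refine le_trans ?_ hsum
    rw [show Q \ {v} = Q.erase v from (Finset.erase_eq Q v).symm,
      Finset.sum_erase_eq_sub hv]
    have hφv : (if x v v < 1/3 then x v v - 1/6 else if x v v < 1/2 then (1/6:ℝ) else 0)
        = -(1/6) := by rw [if_pos] <;> rw [hdiag v] <;> norm_num
    rw [hφv]
    rw [Finset.sum_ite]
    have e1 : Q.filter (fun b => x v b < 1/3) = B1 := rfl
    rw [e1, Finset.sum_sub_distrib, Finset.sum_const, ← Finset.sum_filter]
    have e2 : (Q.filter (fun b => ¬ x v b < 1/3)).filter (fun b => x v b < 1/2)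
        = B2 \ B1 := by
      ext b; simp [hB1, hB2, cutBall]; tauto
    rw [e2, Finset.sum_const]
    simp only [nsmul_eq_mul, smul_eq_mul]
    linarith [hcards]
  · push_neg at hif
    have inner : ∀ a ∈ B1,
        ((B2 \ B1).card : ℝ) * (1/6 - x v a)
          ≤ ∑ b ∈ Q \ B1, min (x a b - 1/6) (1 - x a b) := by
      intro a ha
      have haQ : a ∈ Q := (Finset.filter_subset _ _) ha
      have hax : x v a < 1/3 := (Finset.mem_filter.mp ha).2
      have hpt : ∀ b ∈ Q \ B1,
          (if x v b < 1/2 then 1/6 - x v a else (0:ℝ))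
            ≤ min (x a b - 1/6) (1 - x a b) := by
        intro b hb
        have hbQ : b ∈ Q := (Finset.mem_sdiff.mp hb).1
        have hb13 : ¬ (x v b < 1/3) := by
          have := (Finset.mem_sdiff.mp hb).2
          simp [hB1, cutBall, hbQ] at this; linarith
        push_neg at hb13
        have t1 : x v b ≤ x v a + x a b := htri v b a
        have t2 : x a b ≤ x a v + x v b := htri a b v
        have hs : x a v = x v a := hsym a v
        split_ifs with h2
        · apply le_min <;> linarith
        · push_neg at h2
          apply le_min <;> linarith [hub a b]
      have := Finset.sum_le_sum hpt
      refine le_trans ?_ this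
      rw [← Finset.sum_filter]
      have e3 : (Q \ B1).filter (fun b => x v b < 1/2) = B2 \ B1 := by
        ext b; simp [hB1, hB2, cutBall]; tauto
      rw [e3, Finset.sum_const]
      simp [nsmul_eq_mul]
    calc (0:ℝ) ≤ ((B2 \ B1).card : ℝ) * ((1/6) * B1.card - ∑ q ∈ B1, x v q) := by
          apply mul_nonneg (Nat.cast_nonneg _); linarith
      _ = ∑ a ∈ B1, ((B2 \ B1).card : ℝ) * (1/6 - x v a) := by
          rw [← Finset.mul_sum, Finset.sum_sub_distrib, Finset.sum_const]
          simp only [nsmul_eq_mul, smul_eq_mul]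
          ring
      _ ≤ _ := Finset.sum_le_sum inner

end AuxLemmas

section MainLemmas
variable {V : Type*} [Fintype V] [DecidableEq V] (x : V → V → ℝ)

lemma reached_props (𝒬 : Finset (Finset V)) (h : ReachedBy x 𝒬) :
    (∀ P ∈ 𝒬, ∀ P' ∈ 𝒬, P ≠ P' → Disjoint P P') ∧ (∀ u : V, ∃ P ∈ 𝒬, u ∈ P) := by
  induction h with
  | init => constructor
            · intro P hP P' hP' hne
              simp only [Finset.mem_singleton] at hP hP'
              exact absurd (hP.trans hP'.symm) hne
            · intro u; exact ⟨Finset.univ, Finset.mem_singleton_self _, Finset.mem_univ u⟩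
  | step 𝒬 Q v h𝒬 hQ hv hmax ih =>
    obtain ⟨ihd, ihc⟩ := ih
    set A := (oneThirdCut x Q v).1 with hA
    have hAQ : A ⊆ Q := oneThirdCut_fst_subset x Q v hv
    have hBeq : (oneThirdCut x Q v).2 = Q \ A := oneThirdCut_snd_eq x Q v
    have hmem : ∀ P, P ∈ insert A (insert (oneThirdCut x Q v).2 (𝒬.erase Q)) →
        P = A ∨ P = Q \ A ∨ (P ∈ 𝒬 ∧ P ≠ Q) := by
      intro P hP
      rcases Finset.mem_insert.mp hP with h | h
      · exact Or.inl h
      rcases Finset.mem_insert.mp h with h | h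
      · exact Or.inr (Or.inl (h.trans hBeq))
      · exact Or.inr (Or.inr ⟨Finset.mem_of_mem_erase h, Finset.ne_of_mem_erase h⟩)
    constructor
    · intro P hP P' hP' hne
      rcases hmem P hP with rfl | rfl | ⟨hP1, hP2⟩ <;>
        rcases hmem P' hP' with rfl | rfl | ⟨hP1', hP2'⟩
      · exact absurd rfl hne
      · exact Finset.disjoint_sdiff
      · exact (ihd _ hP1' _ hQ hP2').symm.mono_left hAQ
      · exact Finset.sdiff_disjoint
      · exact absurd rfl hne
      · exact ((ihd _ hP1' _ hQ hP2').symm.mono_left (Finset.sdiff_subset))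
      · exact (ihd _ hP1 _ hQ hP2).mono_right hAQ
      · exact (ihd _ hP1 _ hQ hP2).mono_right (Finset.sdiff_subset)
      · exact ihd _ hP1 _ hP1' hne
    · intro u
      obtain ⟨P, hP, hu⟩ := ihc u
      by_cases hPQ : P = Q
      · by_cases huA : u ∈ A
        · exact ⟨A, Finset.mem_insert_self _ _, huA⟩
        · refine ⟨(oneThirdCut x Q v).2,
            Finset.mem_insert_of_mem (Finset.mem_insert_self _ _), ?_⟩
          rw [hBeq]; exact Finset.mem_sdiff.mpr ⟨hPQ ▸ hu, huA⟩
      · exact ⟨P, Finset.mem_insert_of_mem (Finset.mem_insert_of_mem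
          (Finset.mem_erase.mpr ⟨hPQ, hP⟩)), hu⟩

lemma phi_nonneg (hsym : ∀ u w, x u w = x w u) (hdiag : ∀ u, x u u = 0)
    (hnn : ∀ u w, 0 ≤ x u w) (hub : ∀ u w, x u w ≤ 1)
    (htri : ∀ u w p, x u w ≤ x u p + x p w)
    (E : V → V → Prop)
    (𝒬 : Finset (Finset V)) (h : ReachedBy x 𝒬) :
    0 ≤ ∑ e ∈ Finset.univ.filter (fun e : Sym2 V => ¬ e.IsDiag ∧ ¬ InSamePart 𝒬 e),
          (if Sym2.lift ⟨x, hsym⟩ e = 1 ∧ ¬ EdgePair E e then (0:ℝ)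
           else min (Sym2.lift ⟨x, hsym⟩ e - 1/6) (1 - Sym2.lift ⟨x, hsym⟩ e)) := by
  induction h with
  | init =>
    have : Finset.univ.filter
        (fun e : Sym2 V => ¬ e.IsDiag ∧ ¬ InSamePart ({Finset.univ} : Finset (Finset V)) e)
        = ∅ := by
      rw [Finset.filter_eq_empty_iff]
      intro e _
      induction e using Sym2.ind with
      | _ u w =>
        rw [not_and, not_not]
        intro _
        exact (inSamePart_iff _ u w).mpr
          ⟨Finset.univ, Finset.mem_singleton_self _, Finset.mem_univ u, Finset.mem_univ w⟩
    rw [this, Finset.sum_empty]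
  | step 𝒬 Q v h𝒬 hQ hv hmax ih =>
    obtain ⟨hdisj, _⟩ := reached_props x 𝒬 h𝒬
    set A := (oneThirdCut x Q v).1 with hA
    set B := (oneThirdCut x Q v).2 with hB
    have hAQ : A ⊆ Q := oneThirdCut_fst_subset x Q v hv
    have hBeq : B = Q \ A := oneThirdCut_snd_eq x Q v
    set hfun : Sym2 V → ℝ := fun e =>
      if Sym2.lift ⟨x, hsym⟩ e = 1 ∧ ¬ EdgePair E e then (0:ℝ)
      else min (Sym2.lift ⟨x, hsym⟩ e - 1/6) (1 - Sym2.lift ⟨x, hsym⟩ e) with hhfun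
    set 𝒬' := insert A (insert B (𝒬.erase Q)) with h𝒬'
    set sOld := Finset.univ.filter (fun e : Sym2 V => ¬ e.IsDiag ∧ ¬ InSamePart 𝒬 e) with hsOld
    set sNew := Finset.univ.filter (fun e : Sym2 V => ¬ e.IsDiag ∧ ¬ InSamePart 𝒬' e) with hsNew
    have hmono : sOld ⊆ sNew := by
      intro e he
      rw [hsOld, Finset.mem_filter] at he
      rw [hsNew, Finset.mem_filter]
      refine ⟨he.1, he.2.1, ?_⟩
      rintro ⟨u, w, rfl, P, hP, hu, hw⟩
      apply he.2.2
      rcases Finset.mem_insert.mp hP with rfl | hP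
      · exact (inSamePart_iff 𝒬 u w).mpr ⟨Q, hQ, hAQ hu, hAQ hw⟩
      rcases Finset.mem_insert.mp hP with rfl | hP
      · rw [hBeq] at hu hw
        exact (inSamePart_iff 𝒬 u w).mpr
          ⟨Q, hQ, (Finset.mem_sdiff.mp hu).1, (Finset.mem_sdiff.mp hw).1⟩
      · exact (inSamePart_iff 𝒬 u w).mpr
          ⟨P, Finset.mem_of_mem_erase hP, hu, hw⟩
    have hkey : sNew \ sOld = (A ×ˢ (Q \ A)).image (fun p : V × V => s(p.1, p.2)) := by
      ext e
      simp only [Finset.mem_sdiff, hsOld, hsNew, Finset.mem_filter, Finset.mem_univ,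
        true_and, Finset.mem_image, Finset.mem_product]
      constructor
      · rintro ⟨⟨hd, hnew⟩, hold⟩
        have hsame : InSamePart 𝒬 e := by
          by_contra hc; exact hold ⟨hd, hc⟩
        obtain ⟨u, w, rfl, P, hP, hu, hw⟩ := hsame
        have hPQ : P = Q := by
          by_contra hne
          exact hnew ⟨u, w, rfl, P, Finset.mem_insert_of_mem (Finset.mem_insert_of_mem
            (Finset.mem_erase.mpr ⟨hne, hP⟩)), hu, hw⟩
        subst hPQ
        by_cases huA : u ∈ A
        · by_cases hwA : w ∈ A
          · exact absurd ⟨u, w, rfl, A, Finset.mem_insert_self _ _, huA, hwA⟩ hnew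
          · exact ⟨(u, w), ⟨huA, hw, hwA⟩, rfl⟩
        · have hwA : w ∈ A := by
            by_contra hwA
            refine absurd ⟨u, w, rfl, B, Finset.mem_insert_of_mem
              (Finset.mem_insert_self _ _), ?_, ?_⟩ hnew <;>
              rw [hBeq] <;> exact Finset.mem_sdiff.mpr (by tauto)
          exact ⟨(w, u), ⟨hwA, hu, huA⟩, Sym2.eq_swap⟩
      · rintro ⟨⟨a, b⟩, ⟨ha, hb⟩, rfl⟩
        obtain ⟨hbQ, hbA⟩ := hb
        have hab : a ≠ b := fun h => hbA (h ▸ ha)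
        refine ⟨⟨by simpa using hab, ?_⟩, ?_⟩
        · rintro hsn
          obtain ⟨P, hP, haP, hbP⟩ := (inSamePart_iff 𝒬' a b).mp hsn
          rcases Finset.mem_insert.mp hP with rfl | hP
          · exact hbA hbP
          rcases Finset.mem_insert.mp hP with rfl | hP
          · rw [hBeq] at haP
            exact (Finset.mem_sdiff.mp haP).2 ha
          · have hne : P ≠ Q := Finset.ne_of_mem_erase hP
            exact (Finset.disjoint_left.mp
              (hdisj P (Finset.mem_of_mem_erase hP) Q hQ hne)) haP (hAQ ha)
        · rintro ⟨_, hns⟩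
          exact hns ((inSamePart_iff 𝒬 a b).mpr ⟨Q, hQ, hAQ ha, hbQ⟩)
    have hsplit : ∑ e ∈ sNew, hfun e = ∑ e ∈ sNew \ sOld, hfun e + ∑ e ∈ sOld, hfun e :=
      (Finset.sum_sdiff hmono).symm
    have hinj : ∀ p ∈ A ×ˢ (Q \ A), ∀ q ∈ A ×ˢ (Q \ A),
        s(p.1, p.2) = s(q.1, q.2) → p = q := by
      rintro ⟨a, b⟩ hp ⟨c, d⟩ hq heq
      rw [Finset.mem_product] at hp hq
      rw [Sym2.eq_iff] at heq
      rcases heq with ⟨rfl, rfl⟩ | ⟨rfl, rfl⟩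
      · rfl
      · exact absurd hp.1 (Finset.mem_sdiff.mp hq.2).2
    have himg : ∑ e ∈ sNew \ sOld, hfun e
        = ∑ p ∈ A ×ˢ (Q \ A), hfun s(p.1, p.2) := by
      rw [hkey, Finset.sum_image hinj]
    have hlow : ∀ p ∈ A ×ˢ (Q \ A),
        min (x p.1 p.2 - 1/6) (1 - x p.1 p.2) ≤ hfun s(p.1, p.2) := by
      rintro ⟨a, b⟩ _
      simp only [hhfun, Sym2.lift_mk]
      split_ifs with h1
      · refine le_of_le_of_eq ?_ (if_pos h1).symm
        calc min (x a b - 1/6) (1 - x a b) ≤ 1 - x a b := min_le_right _ _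
          _ = 0 := by rw [h1.1]; ring
      · exact le_of_eq (if_neg h1).symm
    have hdouble : 0 ≤ ∑ p ∈ A ×ˢ (Q \ A), min (x p.1 p.2 - 1/6) (1 - x p.1 p.2) := by
      rw [Finset.sum_product]
      have h0 := cut_sum_nonneg x hsym hdiag hnn hub htri Q v hv
      rw [oneThirdCut_snd_eq x Q v] at h0
      exact h0
    calc (0:ℝ) ≤ ∑ p ∈ A ×ˢ (Q \ A), min (x p.1 p.2 - 1/6) (1 - x p.1 p.2) + ∑ e ∈ sOld, hfun e := by
          have := Finset.sum_le_sum hlow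
          linarith [ih, hdouble]
      _ ≤ ∑ e ∈ sNew \ sOld, hfun e + ∑ e ∈ sOld, hfun e := by
          rw [himg]
          have := Finset.sum_le_sum hlow
          linarith
      _ = ∑ e ∈ sNew, hfun e := hsplit.symm

end MainLemmas
/-- Corollary 4.7: for any partition `𝒬` obtained from `{V}` by refinement steps
of One-Third-Refine-Cut, with `NFPrs(𝒬)` the non-forbidden pairs separated by
`𝒬`, one has
`Σ_{NFPrs(𝒬)∩E} x(i,j) + Σ_{NFPrs(𝒬)∩NE} (1 − x(i,j)) + (1/6)|NFPrs(𝒬)∩NE|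
  ≥ (1/6)|NFPrs(𝒬)|`. -/
theorem stmt8 {V : Type*} [Fintype V] [DecidableEq V]
    (x : V → V → ℝ)
    (hsym : ∀ u w, x u w = x w u) (hdiag : ∀ u, x u u = 0)
    (hnn : ∀ u w, 0 ≤ x u w) (hub : ∀ u w, x u w ≤ 1)
    (htri : ∀ u w p, x u w ≤ x u p + x p w)
    (E : V → V → Prop) (hEsym : ∀ u w, E u w ↔ E w u) (hEirr : ∀ u, ¬ E u u)
    (𝒬 : Finset (Finset V)) (h𝒬 : ReachedBy x 𝒬) :
    (1 / 6 : ℝ) *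
        (Finset.univ.filter (fun e : Sym2 V =>
          ¬ e.IsDiag ∧ ¬ InSamePart 𝒬 e ∧
            ¬ (¬ EdgePair E e ∧ Sym2.lift ⟨x, hsym⟩ e = 1))).card
      ≤ (∑ e ∈ Finset.univ.filter (fun e : Sym2 V =>
            ¬ e.IsDiag ∧ ¬ InSamePart 𝒬 e ∧
              ¬ (¬ EdgePair E e ∧ Sym2.lift ⟨x, hsym⟩ e = 1) ∧ EdgePair E e),
            Sym2.lift ⟨x, hsym⟩ e)
        + (∑ e ∈ Finset.univ.filter (fun e : Sym2 V =>
            ¬ e.IsDiag ∧ ¬ InSamePart 𝒬 e ∧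
              ¬ (¬ EdgePair E e ∧ Sym2.lift ⟨x, hsym⟩ e = 1) ∧ ¬ EdgePair E e),
            (1 - Sym2.lift ⟨x, hsym⟩ e))
        + (1 / 6 : ℝ) *
            (Finset.univ.filter (fun e : Sym2 V =>
              ¬ e.IsDiag ∧ ¬ InSamePart 𝒬 e ∧
                ¬ (¬ EdgePair E e ∧ Sym2.lift ⟨x, hsym⟩ e = 1) ∧ ¬ EdgePair E e)).card := by
  classical
  set L := Sym2.lift ⟨x, hsym⟩ with hL
  set NF := Finset.univ.filter (fun e : Sym2 V =>
      ¬ e.IsDiag ∧ ¬ InSamePart 𝒬 e ∧ ¬ (¬ EdgePair E e ∧ L e = 1)) with hNF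
  have hEfil : Finset.univ.filter (fun e : Sym2 V =>
      ¬ e.IsDiag ∧ ¬ InSamePart 𝒬 e ∧ ¬ (¬ EdgePair E e ∧ L e = 1) ∧ EdgePair E e)
      = NF.filter (fun e => EdgePair E e) := by
    rw [hNF, Finset.filter_filter]
    apply Finset.filter_congr
    intro e _
    tauto
  have hNEfil : Finset.univ.filter (fun e : Sym2 V =>
      ¬ e.IsDiag ∧ ¬ InSamePart 𝒬 e ∧ ¬ (¬ EdgePair E e ∧ L e = 1) ∧ ¬ EdgePair E e)
      = NF.filter (fun e => ¬ EdgePair E e) := by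
    rw [hNF, Finset.filter_filter]
    apply Finset.filter_congr
    intro e _
    tauto
  rw [hEfil, hNEfil]
  set hfun : Sym2 V → ℝ := fun e =>
    if L e = 1 ∧ ¬ EdgePair E e then (0:ℝ) else min (L e - 1/6) (1 - L e) with hh
  have phi := phi_nonneg x hsym hdiag hnn hub htri E 𝒬 h𝒬
  rw [← hL] at phi
  rw [show (fun e : Sym2 V => if L e = 1 ∧ ¬ EdgePair E e then (0:ℝ)
      else min (L e - 1/6) (1 - L e)) = hfun from rfl] at phi
  have hsub : NF ⊆ Finset.univ.filter (fun e : Sym2 V => ¬ e.IsDiag ∧ ¬ InSamePart 𝒬 e) := by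
    intro e he
    simp only [hNF, Finset.mem_filter] at *
    tauto
  have hzero : ∀ e ∈ Finset.univ.filter (fun e : Sym2 V => ¬ e.IsDiag ∧ ¬ InSamePart 𝒬 e),
      e ∉ NF → hfun e = 0 := by
    intro e he hne
    simp only [hNF, Finset.mem_filter, Finset.mem_univ, true_and] at he hne
    have hforb : ¬ EdgePair E e ∧ L e = 1 := by tauto
    simp only [hh]
    exact if_pos ⟨hforb.2, hforb.1⟩
  have heq : ∑ e ∈ NF, hfun e
      = ∑ e ∈ Finset.univ.filter (fun e : Sym2 V => ¬ e.IsDiag ∧ ¬ InSamePart 𝒬 e), hfun e :=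
    Finset.sum_subset hsub hzero
  have hle : ∀ e ∈ NF, hfun e ≤ (if EdgePair E e then L e - 1/6 else 1 - L e) := by
    intro e he
    simp only [hNF, Finset.mem_filter] at he
    by_cases hE : EdgePair E e
    · rw [if_pos hE]
      simp only [hh]
      rw [if_neg (by tauto)]
      exact min_le_left _ _
    · have hne1 : ¬ (L e = 1 ∧ ¬ EdgePair E e) → False → True := fun _ _ => trivial
      have hL1 : L e ≠ 1 := by tauto
      rw [if_neg hE]
      simp only [hh]
      rw [if_neg (by tauto)]
      exact min_le_right _ _
  have key : (0:ℝ) ≤ ∑ e ∈ NF, (if EdgePair E e then L e - 1/6 else 1 - L e) :=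
    le_trans (heq ▸ phi) (Finset.sum_le_sum hle)
  rw [Finset.sum_ite] at key
  have hcard : (NF.card : ℝ) = ((NF.filter (fun e => EdgePair E e)).card : ℝ)
      + ((NF.filter (fun e => ¬ EdgePair E e)).card : ℝ) := by
    rw [← Finset.card_filter_add_card_filter_not (s := NF) (p := fun e => EdgePair E e)]
    push_cast
    ring
  have hexp : ∑ e ∈ NF.filter (fun e => EdgePair E e), (L e - 1/6)
      = ∑ e ∈ NF.filter (fun e => EdgePair E e), L e
        - (1/6) * ((NF.filter (fun e => EdgePair E e)).card : ℝ) := by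
    rw [Finset.sum_sub_distrib, Finset.sum_const, nsmul_eq_mul]
    ring
  rw [hexp] at key
  linarith [key, hcard]
end

section
/- Let x̃ be an optimal solution of LP-(*), let SV^(t) := {{u,v} : x̃^(t){u,v} < 1} and Fbd^(t) := {{u,v} ∈ NE^(t) : x̃^(t){u,v} = 1}, and let x̃* be the restriction of x̃ to the index set {(t,{u,v}) : {u,v} ∈ SV^(t)}. Then x̃* is an optimal solution of LP-(**): it is feasible for LP-(**) and its LP-(**) objective value is minimal among all feasible solutions of LP-(**). -/
open Finset
open scoped Classical

/-- The surviving pairs at layer `t` of the optimal solution `x`: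
`SV^(t) = {{u,v} : x^(t){u,v} < 1}` (pairs of distinct elements). -/
def SurvSV {V : Type*} (x : ℕ → Sym2 V → ℝ) (t : ℕ) : Set (Sym2 V) :=
  {e | ¬ e.IsDiag ∧ x t e < 1}

/-- Feasibility for LP-(**), whose variables are indexed by the surviving pairs
`SVs t` (a solution is recorded as a total function, only its values on
surviving pairs being meaningful): the surviving triangle inequalities, the
replaced triangle inequalities `y^(t)_{u,p} + y^(t)_{p,v} ≥ 1` for removed
third pairs, the surviving hierarchy constraints, and the `[0,1]` bounds. -/
def LPStarStarFeasible {V : Type*} (ℓ : ℕ) (SVs : ℕ → Set (Sym2 V))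
    (y : ℕ → Sym2 V → ℝ) : Prop :=
  (∀ t ∈ Finset.Icc 1 ℓ, ∀ u v p : V,
      s(u, p) ∈ SVs t → s(p, v) ∈ SVs t → s(u, v) ∈ SVs t →
      y t s(u, v) ≤ y t s(u, p) + y t s(p, v)) ∧
  (∀ t ∈ Finset.Icc 1 ℓ, ∀ u v p : V, u ≠ v →
      s(u, p) ∈ SVs t → s(p, v) ∈ SVs t → s(u, v) ∉ SVs t →
      1 ≤ y t s(u, p) + y t s(p, v)) ∧
  (∀ t, 1 ≤ t → t < ℓ → ∀ e : Sym2 V,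
      e ∈ SVs t → e ∈ SVs (t + 1) → y (t + 1) e ≤ y t e) ∧
  (∀ t ∈ Finset.Icc 1 ℓ, ∀ e ∈ SVs t, 0 ≤ y t e ∧ y t e ≤ 1)

/-- The objective value of LP-(**):
`Σ_t δ_t ( |E^(t)∖SV^(t)| + Σ_{{u,v}∈E^(t)∩SV^(t)} y^(t) +
  Σ_{{u,v}∈NE^(t)∖Fbd^(t)} (1 − y^(t)) )`. -/
noncomputable def LPStarStarVal {V : Type*} [Fintype V] [DecidableEq V]
    (ℓ : ℕ) (δ : ℕ → ℝ) (E : ℕ → Finset (Sym2 V))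
    (SVs : ℕ → Set (Sym2 V)) (Fbds : ℕ → Set (Sym2 V))
    (y : ℕ → Sym2 V → ℝ) : ℝ :=
  ∑ t ∈ Finset.Icc 1 ℓ, δ t *
    ((((E t).filter (fun e => e ∉ SVs t)).card : ℝ)
      + (∑ e ∈ (E t).filter (fun e => e ∈ SVs t), y t e)
      + ∑ e ∈ ((Finset.univ.filter (fun e : Sym2 V => ¬ e.IsDiag) \ E t).filter
            (fun e => e ∉ Fbds t)), (1 - y t e))

lemma val_eq' {V : Type*} [Fintype V] [DecidableEq V]
    (ℓ : ℕ) (δ : ℕ → ℝ) (E : ℕ → Finset (Sym2 V))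
    (SVs Fbds : ℕ → Set (Sym2 V)) (z y : ℕ → Sym2 V → ℝ)
    (h1 : ∀ t ∈ Finset.Icc 1 ℓ, ∀ e ∈ E t, e ∉ SVs t → z t e = 1)
    (h2 : ∀ t ∈ Finset.Icc 1 ℓ, ∀ e ∈ E t, e ∈ SVs t → z t e = y t e)
    (h3 : ∀ t ∈ Finset.Icc 1 ℓ, ∀ e : Sym2 V, ¬ e.IsDiag → e ∉ E t → e ∉ Fbds t → z t e = y t e)
    (h4 : ∀ t ∈ Finset.Icc 1 ℓ, ∀ e : Sym2 V, ¬ e.IsDiag → e ∉ E t → e ∈ Fbds t → z t e = 1) :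
    LPStarVal ℓ δ E z = LPStarStarVal ℓ δ E SVs Fbds y := by
  unfold LPStarVal LPStarStarVal
  refine Finset.sum_congr rfl fun t ht => ?_
  congr 1
  have hEsplit : (∑ e ∈ (E t).filter (fun e => e ∈ SVs t), z t e)
      + ∑ e ∈ (E t).filter (fun e => e ∉ SVs t), z t e = ∑ e ∈ E t, z t e :=
    Finset.sum_filter_add_sum_filter_not (E t) _ _
  have hcard : ∑ e ∈ (E t).filter (fun e => e ∉ SVs t), z t e
      = (((E t).filter (fun e => e ∉ SVs t)).card : ℝ) := by
    have : ∑ e ∈ (E t).filter (fun e => e ∉ SVs t), z t e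
        = ∑ _e ∈ (E t).filter (fun e => e ∉ SVs t), (1:ℝ) :=
      Finset.sum_congr rfl (fun e he => by
        rw [Finset.mem_filter] at he
        exact h1 t ht e he.1 he.2)
    rw [this]; simp
  have hEin : ∑ e ∈ (E t).filter (fun e => e ∈ SVs t), z t e
      = ∑ e ∈ (E t).filter (fun e => e ∈ SVs t), y t e :=
    Finset.sum_congr rfl (fun e he => by
      rw [Finset.mem_filter] at he
      exact h2 t ht e he.1 he.2)
  set NE := Finset.univ.filter (fun e : Sym2 V => ¬ e.IsDiag) \ E t with hNE
  have hmemNE : ∀ e ∈ NE, ¬ e.IsDiag ∧ e ∉ E t := by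
    intro e he
    rw [hNE, Finset.mem_sdiff, Finset.mem_filter] at he
    exact ⟨he.1.2, he.2⟩
  have hNEsplit : (∑ e ∈ NE.filter (fun e => e ∉ Fbds t), (1 - z t e))
      + ∑ e ∈ NE.filter (fun e => ¬ e ∉ Fbds t), (1 - z t e)
      = ∑ e ∈ NE, (1 - z t e) :=
    Finset.sum_filter_add_sum_filter_not NE _ _
  have hzero : ∑ e ∈ NE.filter (fun e => ¬ e ∉ Fbds t), (1 - z t e) = 0 := by
    refine Finset.sum_eq_zero fun e he => ?_
    rw [Finset.mem_filter, not_not] at he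
    have := h4 t ht e (hmemNE e he.1).1 (hmemNE e he.1).2 he.2
    linarith
  have hNEeq : ∑ e ∈ NE.filter (fun e => e ∉ Fbds t), (1 - z t e)
      = ∑ e ∈ NE.filter (fun e => e ∉ Fbds t), (1 - y t e) :=
    Finset.sum_congr rfl (fun e he => by
      rw [Finset.mem_filter] at he
      rw [h3 t ht e (hmemNE e he.1).1 (hmemNE e he.1).2 he.2])
  linarith

/-- Lemma 4.9: if `x̃` is an optimal solution of LP-(*), then its restriction to
the surviving pairs `SV^(t) = {{u,v} : x̃^(t){u,v} < 1}` is an optimal solution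
of LP-(**) (with `Fbd^(t) = {{u,v} ∈ NE^(t) : x̃^(t){u,v} = 1}`): it is feasible
for LP-(**) and its LP-(**) objective value is minimal among all feasible
solutions of LP-(**). -/
theorem stmt12 (V : Type*) [Fintype V] [DecidableEq V]
    (ℓ : ℕ) (hℓ : 1 ≤ ℓ)
    (δ : ℕ → ℝ) (hδ : ∀ t, 0 ≤ δ t)
    (E : ℕ → Finset (Sym2 V)) (hE : ∀ t, ∀ e ∈ E t, ¬ e.IsDiag)
    (x : ℕ → Sym2 V → ℝ)
    (hfeas : LPStarFeasible ℓ x)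
    (hopt : ∀ y : ℕ → Sym2 V → ℝ, LPStarFeasible ℓ y →
      LPStarVal ℓ δ E x ≤ LPStarVal ℓ δ E y) :
    LPStarStarFeasible ℓ (SurvSV x) x ∧
    ∀ y : ℕ → Sym2 V → ℝ, LPStarStarFeasible ℓ (SurvSV x) y →
      LPStarStarVal ℓ δ E (SurvSV x)
          (fun t => {e : Sym2 V | ¬ e.IsDiag ∧ e ∉ E t ∧ x t e = 1}) x
        ≤ LPStarStarVal ℓ δ E (SurvSV x)
            (fun t => {e : Sym2 V | ¬ e.IsDiag ∧ e ∉ E t ∧ x t e = 1}) y := by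
  obtain ⟨hdiag, htri, hbd, hmono⟩ := hfeas
  have hSV : ∀ t (e : Sym2 V), e ∈ SurvSV x t ↔ (¬ e.IsDiag ∧ x t e < 1) := by
    intro t e; rfl
  constructor
  · refine ⟨fun t ht u v p _ _ _ => htri t ht u v p, ?_, ?_, ?_⟩
    · intro t ht u v p huv h1 h2 h3
      have hnd : ¬ (s(u, v) : Sym2 V).IsDiag := by
        simp [Sym2.mk_isDiag_iff, huv]
      have : ¬ x t s(u, v) < 1 := fun hlt => h3 ((hSV t _).2 ⟨hnd, hlt⟩)
      have := htri t ht u v p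
      linarith
    · intro t h1 h2 e _ _
      exact hmono t h1 h2 e
    · intro t ht e _
      exact hbd t ht e
  · intro y hy
    obtain ⟨hytri, hytri2, hymono, hybd⟩ := hy
    set Fbds : ℕ → Set (Sym2 V) :=
      fun t => {e : Sym2 V | ¬ e.IsDiag ∧ e ∉ E t ∧ x t e = 1} with hFbds
    set z : ℕ → Sym2 V → ℝ :=
      fun t e => if e.IsDiag then 0 else if e ∈ SurvSV x t then y t e else 1 with hz
    -- basic facts about z
    have hz0 : ∀ t ∈ Finset.Icc 1 ℓ, ∀ e : Sym2 V, 0 ≤ z t e ∧ z t e ≤ 1 := by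
      intro t ht e
      simp only [hz]
      split
      · norm_num
      · split
        · exact hybd t ht e ‹_›
        · norm_num
    have hzSV : ∀ t (e : Sym2 V), ¬ e.IsDiag → e ∈ SurvSV x t → z t e = y t e := by
      intro t e hd hm; simp [hz, hd, hm]
    have hzout : ∀ t (e : Sym2 V), ¬ e.IsDiag → e ∉ SurvSV x t → z t e = 1 := by
      intro t e hd hm; simp [hz, hd, hm]
    have hzdiag : ∀ t (e : Sym2 V), e.IsDiag → z t e = 0 := by
      intro t e hd; simp [hz, hd]
    have hzfeas : LPStarFeasible ℓ z := by
      refine ⟨fun t ht u => hzdiag t _ (by simp), ?_, hz0, ?_⟩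
      · -- triangle inequality
        intro t ht u v p
        have hb := hz0 t ht
        by_cases huv : u = v
        · subst huv
          rw [hzdiag t s(u, u) (by simp)]
          have := (hb s(u, p)).1; have := (hb s(p, u)).1
          linarith
        have hnduv : ¬ (s(u, v) : Sym2 V).IsDiag := by
          simp [Sym2.mk_isDiag_iff, huv]
        by_cases hpu : p = u
        · rw [hzdiag t s(u, p) (by simp [hpu]),
            show (s(p, v) : Sym2 V) = s(u, v) from by rw [hpu]]
          linarith [le_refl (z t s(u, v))]
        by_cases hpv : p = v
        · rw [hzdiag t s(p, v) (by simp [hpv]),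
            show (s(u, p) : Sym2 V) = s(u, v) from by rw [hpv]]
          linarith [le_refl (z t s(u, v))]
        have hndup : ¬ (s(u, p) : Sym2 V).IsDiag := by
          simp [Sym2.mk_isDiag_iff]; exact fun h => hpu h.symm
        have hndpv : ¬ (s(p, v) : Sym2 V).IsDiag := by
          simp [Sym2.mk_isDiag_iff, hpv]
        by_cases hup : s(u, p) ∈ SurvSV x t
        · by_cases hpv' : s(p, v) ∈ SurvSV x t
          · by_cases huv' : s(u, v) ∈ SurvSV x t
            · rw [hzSV t _ hnduv huv', hzSV t _ hndup hup, hzSV t _ hndpv hpv']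
              exact hytri t ht u v p hup hpv' huv'
            · rw [hzout t _ hnduv huv', hzSV t _ hndup hup, hzSV t _ hndpv hpv']
              exact hytri2 t ht u v p huv hup hpv' huv'
          · rw [hzout t _ hndpv hpv']
            linarith [(hb s(u,v)).2, (hb s(u,p)).1]
        · rw [hzout t _ hndup hup]
          linarith [(hb s(u,v)).2, (hb s(p,v)).1]
      · -- hierarchy
        intro t h1 h2 e
        have ht : t ∈ Finset.Icc 1 ℓ := Finset.mem_Icc.2 ⟨h1, le_of_lt h2⟩
        have ht1 : t + 1 ∈ Finset.Icc 1 ℓ := Finset.mem_Icc.2 ⟨by omega, h2⟩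
        by_cases hd : e.IsDiag
        · rw [hzdiag t e hd, hzdiag (t+1) e hd]
        by_cases hS : e ∈ SurvSV x t
        · have hS' : e ∈ SurvSV x (t + 1) :=
            (hSV (t+1) e).2 ⟨hd, lt_of_le_of_lt (hmono t h1 h2 e) ((hSV t e).1 hS).2⟩
          rw [hzSV t e hd hS, hzSV (t+1) e hd hS']
          exact hymono t h1 h2 e hS hS'
        · rw [hzout t e hd hS]
          exact (hz0 (t+1) ht1 e).2
    -- value identities
    have hxval : LPStarVal ℓ δ E x = LPStarStarVal ℓ δ E (SurvSV x) Fbds x := by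
      refine val_eq' ℓ δ E (SurvSV x) Fbds x x ?_ (fun _ _ _ _ _ => rfl)
        (fun _ _ _ _ _ _ => rfl) ?_
      · intro t ht e he hm
        have hnd := hE t e he
        have h1 : ¬ x t e < 1 := fun hlt => hm ((hSV t e).2 ⟨hnd, hlt⟩)
        have := (hbd t ht e).2
        linarith
      · intro t ht e hnd heE hf
        exact hf.2.2
    have hzval : LPStarVal ℓ δ E z = LPStarStarVal ℓ δ E (SurvSV x) Fbds y := by
      refine val_eq' ℓ δ E (SurvSV x) Fbds z y ?_ ?_ ?_ ?_
      · intro t ht e he hm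
        exact hzout t e (hE t e he) hm
      · intro t ht e he hm
        exact hzSV t e (hE t e he) hm
      · intro t ht e hnd heE hf
        have hlt : x t e < 1 := by
          rcases lt_or_eq_of_le ((hbd t ht e).2) with h | h
          · exact h
          · exact absurd ⟨hnd, heE, h⟩ hf
        exact hzSV t e hnd ((hSV t e).2 ⟨hnd, hlt⟩)
      · intro t ht e hnd heE hf
        refine hzout t e hnd ?_
        intro hS
        exact absurd hf.2.2 (ne_of_lt ((hSV t e).1 hS).2)
    calc LPStarStarVal ℓ δ E (SurvSV x) Fbds x
        = LPStarVal ℓ δ E x := hxval.symm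
      _ ≤ LPStarVal ℓ δ E z := hopt z hzfeas
      _ = LPStarStarVal ℓ δ E (SurvSV x) Fbds y := hzval
end

section
/- Let 0 < α ≤ 1/2 and let a_1 ≥ a_2 ≥ … ≥ a_k ≥ 0 be reals with Σ_{j=2}^k a_j ≥ α·a_1. Then there exists a partition of {1,…,k} into two sets I and J such that α · Σ_{i∈I} a_i ≤ Σ_{j∈J} a_j ≤ Σ_{i∈I} a_i. -/
set_option maxHeartbeats 1000000


/-- The grouping claim used in the balanced case of the forbidden-pairs bound:
given `0 < α ≤ 1/2` and reals `a 1 ≥ a 2 ≥ … ≥ a k ≥ 0` with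
`Σ_{j=2}^k a j ≥ α · a 1`, the index set `{1, …, k}` can be partitioned into
two sets `I` and `J` with `α · Σ_{i∈I} a i ≤ Σ_{j∈J} a j ≤ Σ_{i∈I} a i`. -/
theorem stmt14 (α : ℝ) (hα0 : 0 < α) (hα1 : α ≤ 1 / 2)
    (k : ℕ) (hk : 1 ≤ k) (a : ℕ → ℝ)
    (hmono : ∀ i j, 1 ≤ i → i ≤ j → j ≤ k → a j ≤ a i)
    (hnonneg : ∀ j ∈ Finset.Icc 1 k, 0 ≤ a j)
    (hsum : α * a 1 ≤ ∑ j ∈ Finset.Icc 2 k, a j) :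
    ∃ I J : Finset ℕ, I ∪ J = Finset.Icc 1 k ∧ Disjoint I J ∧
      α * ∑ i ∈ I, a i ≤ ∑ j ∈ J, a j ∧ ∑ j ∈ J, a j ≤ ∑ i ∈ I, a i := by
  have hnn : ∀ j, 1 ≤ j → j ≤ k → 0 ≤ a j := by
    intro j h1 h2; exact hnonneg j (Finset.mem_Icc.mpr ⟨h1, h2⟩)
  have hIcc : Finset.Icc 1 k = Finset.Ioc 0 k := by rw [← Finset.Icc_add_one_left_eq_Ioc]; rfl
  have hIcc2 : Finset.Icc 2 k = Finset.Ioc 1 k := by rw [← Finset.Icc_add_one_left_eq_Ioc]; rfl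
  set S : ℝ := ∑ j ∈ Finset.Icc 2 k, a j with hSdef
  set P : ℕ → ℝ := fun m => ∑ j ∈ Finset.Ioc 0 m, a j with hPdef
  set T : ℝ := P k with hTdef
  have hPsplit : ∀ m, m ≤ k → P m + ∑ j ∈ Finset.Ioc m k, a j = T := by
    intro m hm; exact Finset.sum_Ioc_consecutive _ (Nat.zero_le m) hm
  have hP1 : P 1 = a 1 := by
    simp only [hPdef]
    rw [show Finset.Ioc 0 1 = {1} from by decide, Finset.sum_singleton]
  have hP2 : P 2 = a 1 + a 2 := by
    simp only [hPdef]
    rw [show Finset.Ioc 0 2 = {1, 2} from by decide,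
      Finset.sum_insert (by decide), Finset.sum_singleton]
  have hTS : T = a 1 + S := by
    rw [← hPsplit 1 hk, hP1, hSdef, hIcc2]
  have ha1 : 0 ≤ a 1 := hnn 1 le_rfl hk
  have hSnn : 0 ≤ S := by
    rw [hSdef]; exact Finset.sum_nonneg fun j hj => by
      rw [Finset.mem_Icc] at hj; exact hnn j (by omega) hj.2
  have hT0 : 0 ≤ T := by rw [hTS]; linarith
  by_cases hA : S ≤ a 1
  · -- Case A : I = {1}, J = Icc 2 k
    refine ⟨{1}, Finset.Icc 2 k, ?_, ?_, ?_, ?_⟩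
    · ext x; simp only [Finset.mem_union, Finset.mem_singleton, Finset.mem_Icc]; omega
    · rw [Finset.disjoint_singleton_left]; simp
    · rw [Finset.sum_singleton]; exact hsum
    · rw [Finset.sum_singleton]; exact hA
  · push_neg at hA
    have hT0' : 0 < T := by rw [hTS]; linarith
    -- minimal m with 1 ≤ m ≤ k and T ≤ 2 * P m
    have hex : ∃ m, 1 ≤ m ∧ m ≤ k ∧ T ≤ 2 * P m := ⟨k, hk, le_rfl, by linarith⟩
    classical
    set m := Nat.find hex with hmdef
    obtain ⟨hm1, hmk, hmT⟩ := Nat.find_spec hex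
    rw [← hmdef] at hm1 hmk hmT
    have hdisjIoc : ∀ a b c : ℕ, Disjoint (Finset.Ioc a b) (Finset.Ioc b c) := by
      intro a b c
      rw [Finset.disjoint_left]
      intro x hx hx'
      rw [Finset.mem_Ioc] at hx hx'
      omega
    have hmin : ∀ j, j < m → ¬(1 ≤ j ∧ j ≤ k ∧ T ≤ 2 * P j) := fun j hj => Nat.find_min hex hj
    have hm2 : 2 ≤ m := by
      rcases Nat.lt_or_ge m 2 with h | h
      · exfalso
        have hm : m = 1 := by omega
        rw [hm, hP1] at hmT
        linarith
      · exact h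
    have hmprev : 2 * P (m - 1) < T := by
      have := hmin (m - 1) (by omega)
      push_neg at this
      have := this (by omega) (by omega)
      linarith
    have hdiff : P m = P (m - 1) + a m := by
      have h : P (m-1) + ∑ j ∈ Finset.Ioc (m-1) m, a j = P m :=
        Finset.sum_Ioc_consecutive _ (Nat.zero_le _) (by omega)
      rw [show Finset.Ioc (m-1) m = {m} from by
          rw [show m = (m-1) + 1 from by omega]; simp [Nat.Ioc_succ_singleton],
        Finset.sum_singleton] at h
      linarith
    by_cases hc1 : (1 + α) * (2 * P m - T) ≤ (1 - α) * T
    · -- split at m : I = Ioc 0 m, J = Ioc m k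
      refine ⟨Finset.Ioc 0 m, Finset.Ioc m k, ?_, hdisjIoc _ _ _, ?_, ?_⟩
      · rw [hIcc, Finset.Ioc_union_Ioc_eq_Ioc (Nat.zero_le m) hmk]
      · have hJ : ∑ j ∈ Finset.Ioc m k, a j = T - P m := by
          have := hPsplit m hmk; linarith
        rw [hJ]; show α * P m ≤ T - P m; nlinarith
      · have hJ : ∑ j ∈ Finset.Ioc m k, a j = T - P m := by
          have := hPsplit m hmk; linarith
        rw [hJ]; show T - P m ≤ P m; linarith
    · by_cases hc2 : (1 + α) * (T - 2 * P (m - 1)) ≤ (1 - α) * T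
      · -- split at m-1, with the big side being the tail : I = Ioc (m-1) k, J = Ioc 0 (m-1)
        refine ⟨Finset.Ioc (m-1) k, Finset.Ioc 0 (m-1), ?_, ?_, ?_, ?_⟩
        · rw [Finset.union_comm, hIcc, Finset.Ioc_union_Ioc_eq_Ioc (Nat.zero_le _) (by omega)]
        · exact (hdisjIoc _ _ _).symm
        · have hI : ∑ j ∈ Finset.Ioc (m-1) k, a j = T - P (m-1) := by
            have := hPsplit (m-1) (by omega); linarith
          rw [hI]; show α * (T - P (m-1)) ≤ P (m-1); nlinarith
        · have hI : ∑ j ∈ Finset.Ioc (m-1) k, a j = T - P (m-1) := by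
            have := hPsplit (m-1) (by omega); linarith
          rw [hI]; show P (m-1) ≤ T - P (m-1); linarith
      · push_neg at hc1 hc2
        -- both prefix splits fail : a m is big, m = 2, use I = {1} ∪ Ioc 2 k, J = {2}
        have ham_nn : 0 ≤ a m := hnn m (by omega) hmk
        have ham : (1 - α) * T < (1 + α) * a m := by nlinarith
        have ham3 : T < 3 * a m := by nlinarith
        have ha2m : a m ≤ a 2 := hmono 2 m (by omega) hm2 hmk
        have ha12 : a 2 ≤ a 1 := hmono 1 2 le_rfl (by omega) (by omega)
        have hmeq : m = 2 := by
          by_contra hne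
          have hm3 : 3 ≤ m := by omega
          have hP2le : P 2 ≤ P (m - 1) := by
            have h := Finset.sum_Ioc_consecutive a (Nat.zero_le 2) (show 2 ≤ m - 1 by omega)
            have hpos : 0 ≤ ∑ j ∈ Finset.Ioc 2 (m-1), a j := by
              refine Finset.sum_nonneg fun j hj => ?_
              rw [Finset.mem_Ioc] at hj
              exact hnn j (by omega) (by omega)
            show P 2 ≤ P (m-1)
            rw [hPdef] at *
            linarith [h, hpos]
          rw [hP2] at hP2le
          linarith
        rw [hmeq] at ham ham3
        have hRdef : ∑ j ∈ Finset.Ioc 2 k, a j = T - a 1 - a 2 := by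
          have := hPsplit 2 (by omega); rw [hP2] at this; linarith
        set R : ℝ := ∑ j ∈ Finset.Ioc 2 k, a j with hR
        have hRnn : 0 ≤ R := by
          refine Finset.sum_nonneg fun j hj => ?_
          rw [Finset.mem_Ioc] at hj
          exact hnn j (by omega) hj.2
        have hRa2 : R < a 2 := by rw [hRdef]; linarith
        have hTfull : T = a 1 + a 2 + R := by rw [hRdef]; ring
        have hc2' : (1 - α) * T < (1 + α) * (T - 2 * a 1) := by
          have h1' : P (m - 1) = a 1 := by rw [hmeq]; exact hP1
          rw [h1'] at hc2
          exact hc2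
        have haT : α * T = α * a 1 + α * a 2 + α * R := by rw [hTfull]; ring
        have ha1lt : a 1 < α * (a 2 + R) := by
          have hexp : α * (a 2 + R) = α * a 2 + α * R := by ring
          rw [hexp]
          linarith [hc2', haT]
        refine ⟨insert 1 (Finset.Ioc 2 k), {2}, ?_, ?_, ?_, ?_⟩
        · ext x
          simp only [Finset.mem_union, Finset.mem_insert, Finset.mem_Ioc, Finset.mem_Icc,
            Finset.mem_singleton]
          omega
        · rw [Finset.disjoint_singleton_right]
          simp only [Finset.mem_insert, Finset.mem_Ioc]
          omega
        · rw [Finset.sum_insert (by simp), Finset.sum_singleton, ← hR]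
          nlinarith [mul_lt_mul_of_pos_left ha1lt hα0, mul_nonneg hα0.le hRnn,
            mul_nonneg (mul_nonneg hα0.le hα0.le) hRnn,
            mul_nonneg (mul_nonneg hα0.le hα0.le) (hnn 2 (by omega) (by omega)),
            hnn 2 (by omega) (by omega)]
        · rw [Finset.sum_insert (by simp), Finset.sum_singleton, ← hR]
          linarith
end
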